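/- arXiv:1302.4415 — 3 statements merged into one kernel-verified Lean document; each statement's English description precedes it below -/
import Mathlib

section
/- The family of delta-matroids that are inv-representable over GF(4) is closed under vertex flips: if M = M_A * X for an inv-symmetric V×V matrix A over GF(4) and X ⊆ V, then for any sequence φ of pivots and loop complementations over V, Mφ is again of the form M_{A'} * W for some inv-symmetric matrix A' over GF(4) and W ⊆ V; in particular Mφ is a delta-matroid. -/
open Matrix
open scoped symmDiff

variable {V : Type} [Fintype V] [DecidableEq V]

/-- principal submatrix of A indexed by X -/
def pSub {F : Type} [Field F] (A : Matrix V V F) (X : Finset V) : Matrix X X F :=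
  Matrix.of fun i j => A i.1 j.1

open scoped Classical in
/-- the set system of index sets of nonsingular principal submatrices of A -/
noncomputable def MA {F : Type} [Field F] (A : Matrix V V F) : Finset (Finset V) :=
  Finset.univ.filter (fun X => (pSub A X).det ≠ 0)

/-- pivot (twist) of a set system on X -/
def pivotOp (E : Finset (Finset V)) (X : Finset V) : Finset (Finset V) :=
  E.image (fun Y => Y ∆ X)

/-- loop complementation of a set system on u -/
def loopC (E : Finset (Finset V)) (u : V) : Finset (Finset V) :=
  E ∆ ((E.filter (fun Y => u ∉ Y)).image (fun Y => insert u Y))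

/-- apply a sequence of vertex flips: `Sum.inl u` is pivot *u,
`Sum.inr u` is loop complementation +u -/
def applyFlips (E : Finset (Finset V)) (φ : List (V ⊕ V)) : Finset (Finset V) :=
  φ.foldl (fun E op => match op with
    | Sum.inl u => pivotOp E {u}
    | Sum.inr u => loopC E u) E

/-- a delta-matroid: a nonempty set system satisfying symmetric exchange -/
def IsDeltaMatroid (E : Finset (Finset V)) : Prop :=
  E.Nonempty ∧ ∀ X ∈ E, ∀ Y ∈ E, ∀ u ∈ X ∆ Y,
    X ∆ ({u} : Finset V) ∈ E ∨ ∃ v ∈ X ∆ Y, v ≠ u ∧ X ∆ ({u, v} : Finset V) ∈ E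

/-- A is inv-symmetric over GF(4): inv(−Aᵀ) = A entrywise, inv = (·²) -/
def InvSymm (A : Matrix V V (GaloisField 2 2)) : Prop :=
  ∀ i j, (-(Aᵀ i j)) ^ 2 = A i j

namespace DM

local notation "F" => GaloisField 2 2

/-! ### GF(4) facts -/

lemma Fneg (a : F) : -a = a := CharTwo.neg_eq a

lemma Fadd_self (a : F) : a + a = 0 := CharTwo.add_self_eq_zero a

lemma Fsq_cases {a : F} (h : a ^ 2 = a) : a = 0 ∨ a = 1 := by
  have h2 : a * (a - 1) = 0 := by
    have h3 : a ^ 2 - a = 0 := by rw [h]; ring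
    calc a * (a - 1) = a ^ 2 - a := by ring
    _ = 0 := h3
  rcases mul_eq_zero.1 h2 with h | h
  · exact Or.inl h
  · exact Or.inr (sub_eq_zero.1 h)

lemma Fcube {b : F} (hb : b ≠ 0) : b ^ 3 = 1 := by
  haveI : Fintype F := Fintype.ofFinite F
  have hc : Fintype.card F = 4 := by
    rw [← Nat.card_eq_fintype_card, GaloisField.card 2 2 (by norm_num)]
    norm_num
  have h := FiniteField.pow_card_sub_one_eq_one b hb
  rw [hc] at h
  simpa using h

/-! ### Hermitian matrices -/

def Herm (B : Matrix V V F) : Prop := ∀ i j, (B j i) ^ 2 = B i j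

lemma invSymm_of_herm {B : Matrix V V F} (h : Herm B) : InvSymm B := fun i j => by
  rw [transpose_apply, Fneg]; exact h i j

lemma herm_of_invSymm {B : Matrix V V F} (h : InvSymm B) : Herm B := fun i j => by
  have h' := h i j; rwa [transpose_apply, Fneg] at h'

lemma Herm.diag {B : Matrix V V F} (h : Herm B) (u : V) : B u u = 0 ∨ B u u = 1 :=
  Fsq_cases (h u u)

lemma Herm.det01 {B : Matrix V V F} (h : Herm B) (Y : Finset V) :
    (pSub B Y).det = 0 ∨ (pSub B Y).det = 1 := by
  apply Fsq_cases
  have hmap : (pSub B Y).map (frobenius F 2) = (pSub B Y)ᵀ := by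
    ext i j
    simp [pSub, frobenius_def, h i.1 j.1, h j.1 i.1]
  calc (pSub B Y).det ^ 2 = frobenius F 2 (pSub B Y).det := by rw [frobenius_def]
  _ = ((pSub B Y).map (frobenius F 2)).det := (RingHom.map_det _ _)
  _ = (pSub B Y)ᵀ.det := by rw [hmap]
  _ = (pSub B Y).det := det_transpose _

/-! ### symmetric difference helpers -/

lemma sd_cancel (a b : Finset V) : a ∆ b ∆ b = a := symmDiff_symmDiff_cancel_right b a

lemma sdd (a b c : Finset V) : (a ∆ c) ∆ (b ∆ c) = a ∆ b := by
  ext x; simp only [Finset.mem_symmDiff]; tauto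

lemma sd_right_comm (a b c : Finset V) : a ∆ b ∆ c = a ∆ c ∆ b := by
  rw [symmDiff_assoc, symmDiff_comm b c, ← symmDiff_assoc]

lemma sd_rot (X T S : Finset V) : ((X ∆ T) ∆ S) ∆ T = X ∆ S := by
  ext x; simp only [Finset.mem_symmDiff]; tauto

lemma sd_single_mem {Z : Finset V} {u : V} (hu : u ∈ Z) :
    Z ∆ ({u} : Finset V) = Z.erase u := by
  ext a
  by_cases ha : a = u
  · subst ha; simp [Finset.mem_symmDiff, hu]
  · simp [Finset.mem_symmDiff, ha, Finset.mem_erase]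

lemma sd_single_notMem {Z : Finset V} {u : V} (hu : u ∉ Z) :
    Z ∆ ({u} : Finset V) = insert u Z := by
  ext a
  by_cases ha : a = u
  · subst ha; simp [Finset.mem_symmDiff, hu]
  · simp [Finset.mem_symmDiff, ha, Finset.mem_insert]

lemma mem_sd_single {Z : Finset V} {u : V} : u ∈ Z ∆ ({u} : Finset V) ↔ u ∉ Z := by
  simp [Finset.mem_symmDiff]

lemma sd_insert {s : Finset V} {u : V} (hu : u ∉ s) :
    (insert u s) ∆ ({u} : Finset V) = s := by
  rw [sd_single_mem (Finset.mem_insert_self u s), Finset.erase_insert hu]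

lemma erase_sd {Z X : Finset V} {u : V} (hu : u ∉ X) :
    (Z ∆ X).erase u = (Z.erase u) ∆ X := by
  ext a
  by_cases ha : a = u
  · subst ha; simp [Finset.mem_symmDiff, Finset.mem_erase, hu]
  · simp [Finset.mem_symmDiff, Finset.mem_erase, ha]

lemma empty_sd (s : Finset V) : (∅ : Finset V) ∆ s = s := by
  ext a; simp [Finset.mem_symmDiff]

lemma sd_pair {x y : V} (hxy : x ≠ y) : ({x} : Finset V) ∆ {y} = {x, y} := by
  ext a
  by_cases hax : a = x
  · subst hax; simp [Finset.mem_symmDiff, hxy]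
  · by_cases hay : a = y
    · subst hay; simp [Finset.mem_symmDiff, Ne.symm hxy, hxy]
    · simp [Finset.mem_symmDiff, hax, hay]

lemma single_sd_erase {W : Finset V} {u : V} (hu : u ∈ W) :
    ({u} : Finset V) ∆ W.erase u = W := by
  ext a
  by_cases ha : a = u
  · subst ha; simp [Finset.mem_symmDiff, hu]
  · simp [Finset.mem_symmDiff, Finset.mem_erase, ha]

/-! ### membership lemmas for the set-system operations -/

lemma mem_MA {Fd : Type} [Field Fd] {B : Matrix V V Fd} {Z : Finset V} :
    Z ∈ MA B ↔ (pSub B Z).det ≠ 0 := by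
  classical
  simp [MA]

lemma mem_pivot {E : Finset (Finset V)} {X Z : Finset V} :
    Z ∈ pivotOp E X ↔ Z ∆ X ∈ E := by
  constructor
  · intro h
    rcases Finset.mem_image.1 h with ⟨Y, hY, rfl⟩
    rwa [sd_cancel]
  · intro h
    exact Finset.mem_image.2 ⟨Z ∆ X, h, by rw [sd_cancel]⟩

lemma mem_insert_image {E : Finset (Finset V)} {u : V} {Z : Finset V} :
    Z ∈ (E.filter (fun Y => u ∉ Y)).image (fun Y => insert u Y) ↔
      u ∈ Z ∧ Z.erase u ∈ E := by
  simp only [Finset.mem_image, Finset.mem_filter]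
  constructor
  · rintro ⟨Y, ⟨hY, hu⟩, rfl⟩
    exact ⟨Finset.mem_insert_self u Y, by rwa [Finset.erase_insert hu]⟩
  · rintro ⟨hu, hE⟩
    exact ⟨Z.erase u, ⟨hE, Finset.notMem_erase u Z⟩, Finset.insert_erase hu⟩

lemma mem_loopC {E : Finset (Finset V)} {u : V} {Z : Finset V} :
    Z ∈ loopC E u ↔
      ((Z ∈ E ∧ ¬(u ∈ Z ∧ Z.erase u ∈ E)) ∨ ((u ∈ Z ∧ Z.erase u ∈ E) ∧ Z ∉ E)) := by
  rw [loopC, Finset.mem_symmDiff, mem_insert_image]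

/-! ### group identities for the operations -/

lemma pivot_pivot (E : Finset (Finset V)) (X X' : Finset V) :
    pivotOp (pivotOp E X) X' = pivotOp E (X ∆ X') := by
  ext Z
  rw [mem_pivot, mem_pivot, mem_pivot, symmDiff_assoc, symmDiff_comm X' X]

lemma pivot_bot (E : Finset (Finset V)) : pivotOp E (⊥ : Finset V) = E := by
  ext Z
  rw [mem_pivot, symmDiff_bot]

lemma loopC_loopC (E : Finset (Finset V)) (u : V) : loopC (loopC E u) u = E := by
  ext Z
  by_cases hu : u ∈ Z
  · have h1 : u ∉ Z.erase u := Finset.notMem_erase u Z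
    simp only [mem_loopC, hu, h1, true_and, false_and, and_false, not_false_iff, and_true,
      or_false, false_or, not_and, not_or, not_not]
    tauto
  · simp only [mem_loopC, hu, false_and, and_false, not_false_iff, and_true, or_false,
      not_and]

lemma loopC_pivot_comm (E : Finset (Finset V)) {X : Finset V} {u : V} (hu : u ∉ X) :
    loopC (pivotOp E X) u = pivotOp (loopC E u) X := by
  ext Z
  have h3 : u ∈ Z ∆ X ↔ u ∈ Z := by simp [Finset.mem_symmDiff, hu]
  simp only [mem_loopC, mem_pivot, h3, erase_sd hu]

lemma braid (E : Finset (Finset V)) (u : V) :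
    loopC (pivotOp (loopC E u) {u}) u = pivotOp (loopC (pivotOp E {u}) u) {u} := by
  ext Z
  by_cases hu : u ∈ Z
  · have h2 : u ∉ Z ∆ ({u} : Finset V) := by simp [mem_sd_single, hu]
    have h1 : Z.erase u = Z ∆ ({u} : Finset V) := (sd_single_mem hu).symm
    have h4 : (Z ∆ ({u} : Finset V)).erase u = Z ∆ ({u} : Finset V) :=
      Finset.erase_eq_of_notMem h2
    simp only [mem_loopC, mem_pivot, h1, h4, sd_cancel, hu, h2, true_and, false_and,
      and_false, and_true, or_false, false_or, not_and, not_or, not_not]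
    tauto
  · have h2 : u ∈ Z ∆ ({u} : Finset V) := by simp [mem_sd_single, hu]
    have h4 : (Z ∆ ({u} : Finset V)).erase u = Z := by
      rw [sd_single_notMem hu, Finset.erase_insert hu]
    simp only [mem_loopC, mem_pivot, h2, h4, sd_cancel, hu, true_and, false_and,
      and_false, and_true, or_false, false_or, not_and, not_or, not_not]
    tauto

lemma star_plus (E : Finset (Finset V)) (u : V) :
    loopC (pivotOp E {u}) u
      = pivotOp (loopC (pivotOp (loopC E u) {u}) u) {u} := by
  rw [braid, pivot_pivot, symmDiff_self, pivot_bot]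

lemma six_op (E : Finset (Finset V)) {x y : V} (hxy : x ≠ y) :
    loopC (pivotOp (pivotOp (loopC (pivotOp (loopC E x) {x}) x) {y}) {x}) x
      = pivotOp E {x, y} := by
  rw [braid, pivot_pivot, pivot_pivot]
  have h1 : ({x} : Finset V) ∆ (({y} : Finset V) ∆ {x}) = {y} := by
    rw [symmDiff_comm ({y} : Finset V) {x}, symmDiff_symmDiff_cancel_left]
  rw [h1]
  have h2 : x ∉ ({y} : Finset V) := by simp [hxy]
  rw [loopC_pivot_comm _ h2, loopC_loopC, pivot_pivot, sd_pair hxy]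

/-! ### the two matrix operations -/

noncomputable def tog (u : V) (B : Matrix V V F) : Matrix V V F :=
  Matrix.of fun i j => if i = u ∧ j = u then B i j + 1 else B i j

noncomputable def ppt (u : V) (B : Matrix V V F) : Matrix V V F :=
  Matrix.of fun i j =>
    if i = u then (if j = u then 1 else B u j)
    else if j = u then B i u
    else B i j + B i u * B u j

lemma tog_diag (u : V) (B : Matrix V V F) : tog u B u u = B u u + 1 := by
  simp [tog]

lemma Herm.tog {B : Matrix V V F} (h : Herm B) (u : V) : Herm (DM.tog u B) := by
  have key : ∀ a b, ¬(a = u ∧ b = u) → DM.tog u B a b = B a b := by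
    intro a b hab
    simp only [DM.tog, Matrix.of_apply, if_neg hab]
  intro i j
  by_cases hij : i = u ∧ j = u
  · rw [hij.1, hij.2, tog_diag, CharTwo.add_sq, h u u, one_pow]
  · have hji : ¬(j = u ∧ i = u) := fun hh => hij ⟨hh.2, hh.1⟩
    rw [key _ _ hji, key _ _ hij]
    exact h i j

lemma Herm.ppt {B : Matrix V V F} (h : Herm B) {u : V} (hu : B u u = 1) :
    Herm (DM.ppt u B) := by
  have papp : ∀ a b, DM.ppt u B a b
      = if a = u then (if b = u then 1 else B u b)
        else if b = u then B a u else B a b + B a u * B u b := fun _ _ => rfl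
  intro i j
  by_cases hi : i = u <;> by_cases hj : j = u
  · rw [hi, hj, papp, if_pos rfl, if_pos rfl, one_pow]
  · have e1 : DM.ppt u B j u = B j u := by simp [DM.ppt, hj]
    have e2 : DM.ppt u B u j = B u j := by simp [DM.ppt, hj]
    rw [hi, e1, e2]
    exact h u j
  · have e1 : DM.ppt u B u i = B u i := by simp [DM.ppt, hi]
    have e2 : DM.ppt u B i u = B i u := by simp [DM.ppt, hi]
    rw [hj, e1, e2]
    exact h i u
  · have e1 : DM.ppt u B j i = B j i + B j u * B u i := by simp [DM.ppt, hi, hj]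
    have e2 : DM.ppt u B i j = B i j + B i u * B u j := by simp [DM.ppt, hi, hj]
    rw [e1, e2, CharTwo.add_sq, mul_pow, h i j, h u j, h i u]
    ring

/-! ### the key determinant identities -/

def insEquiv (u : V) (s : Finset V) (hu : u ∉ s) :
    (Unit ⊕ {x // x ∈ s}) ≃ {x // x ∈ insert u s} where
  toFun z := match z with
    | Sum.inl _ => ⟨u, Finset.mem_insert_self u s⟩
    | Sum.inr j => ⟨j.1, Finset.mem_insert_of_mem j.2⟩
  invFun z :=
    if h : z.1 = u then Sum.inl () else
      Sum.inr ⟨z.1, by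
        rcases Finset.mem_insert.1 z.2 with h' | h'
        · exact absurd h' h
        · exact h'⟩
  left_inv z := by
    rcases z with _ | j
    · simp
    · have hj : (j.1 : V) ≠ u := fun h => hu (h ▸ j.2)
      simp [hj]
  right_inv z := by
    rcases z with ⟨v, hv⟩
    by_cases h : v = u
    · subst h; simp
    · simp [h]

lemma det_insert (B : Matrix V V F) (u : V) (s : Finset V) (hu : u ∉ s) :
    (pSub B (insert u s)).det =
    (fromBlocks (Matrix.of fun (_ : Unit) (_ : Unit) => B u u)
      (Matrix.of fun (_ : Unit) (j : {x // x ∈ s}) => B u j.1)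
      (Matrix.of fun (i : {x // x ∈ s}) (_ : Unit) => B i.1 u) (pSub B s)).det := by
  rw [← Matrix.det_submatrix_equiv_self (insEquiv u s hu) (pSub B (insert u s))]
  congr 1
  ext i j
  rcases i with _ | i <;> rcases j with _ | j <;> rfl

lemma corner_one {a : F} (ha : a = 1) :
    (Matrix.of fun (_ : Unit) (_ : Unit) => a) = (1 : Matrix Unit Unit F) := by
  ext i j
  simp [ha, Matrix.one_apply]

/-- pivot identity, `u` added -/
lemma det_ppt_insert (B : Matrix V V F) {u : V} (hu : B u u = 1) {s : Finset V}
    (hus : u ∉ s) :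
    (pSub (ppt u B) (insert u s)).det = (pSub B s).det := by
  rw [det_insert (ppt u B) u s hus]
  have hc : ppt u B u u = 1 := by simp [ppt]
  rw [corner_one hc, det_fromBlocks_one₁₁]
  congr 1
  ext i j
  have hi : (i.1 : V) ≠ u := fun h => hus (h ▸ i.2)
  have hj : (j.1 : V) ≠ u := fun h => hus (h ▸ j.2)
  simp only [Matrix.sub_apply, Matrix.mul_apply, Finset.univ_unique, Finset.sum_singleton,
    Matrix.of_apply, pSub]
  rw [show DM.ppt u B i.1 j.1 = B i.1 j.1 + B i.1 u * B u j.1 from by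
        simp [DM.ppt, hi, hj],
      show DM.ppt u B i.1 u = B i.1 u from by simp [DM.ppt, hi],
      show DM.ppt u B u j.1 = B u j.1 from by simp [DM.ppt, hj]]
  ring

/-- pivot identity, `u` removed -/
lemma det_ppt_notMem (B : Matrix V V F) {u : V} (hu : B u u = 1) {s : Finset V}
    (hus : u ∉ s) :
    (pSub (ppt u B) s).det = (pSub B (insert u s)).det := by
  rw [det_insert B u s hus, corner_one hu, det_fromBlocks_one₁₁]
  congr 1
  ext i j
  have hi : (i.1 : V) ≠ u := fun h => hus (h ▸ i.2)
  have hj : (j.1 : V) ≠ u := fun h => hus (h ▸ j.2)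
  simp only [Matrix.sub_apply, Matrix.mul_apply, Finset.univ_unique, Finset.sum_singleton,
    Matrix.of_apply, pSub]
  rw [show DM.ppt u B i.1 j.1 = B i.1 j.1 + B i.1 u * B u j.1 from by
        simp [DM.ppt, hi, hj]]
  rw [sub_eq_add_neg, Fneg]

lemma pSub_tog {B : Matrix V V F} {u : V} {s : Finset V} (hus : u ∉ s) :
    pSub (tog u B) s = pSub B s := by
  ext i j
  have hi : (i.1 : V) ≠ u := fun h => hus (h ▸ i.2)
  simp [pSub, tog, hi]

/-- toggle identity -/
lemma det_tog_insert (B : Matrix V V F) (u : V) {s : Finset V} (hus : u ∉ s) :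
    (pSub (tog u B) (insert u s)).det
      = (pSub B (insert u s)).det + (pSub B s).det := by
  rw [det_insert (tog u B) u s hus, det_insert B u s hus]
  set R : Matrix Unit {x // x ∈ s} F := Matrix.of fun (_ : Unit) (j : {x // x ∈ s}) => B u j.1 with hR
  set C : Matrix {x // x ∈ s} Unit F := Matrix.of fun (i : {x // x ∈ s}) (_ : Unit) => B i.1 u with hC
  set M : Matrix (Unit ⊕ {x // x ∈ s}) (Unit ⊕ {x // x ∈ s}) F :=
    fromBlocks (Matrix.of fun (_ : Unit) (_ : Unit) => B u u) R C (pSub B s) with hM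
  have h1 : fromBlocks (Matrix.of fun (_ : Unit) (_ : Unit) => tog u B u u)
      (Matrix.of fun (_ : Unit) (j : {x // x ∈ s}) => tog u B u j.1)
      (Matrix.of fun (i : {x // x ∈ s}) (_ : Unit) => tog u B i.1 u) (pSub (tog u B) s)
      = Matrix.updateRow M (Sum.inl ()) (M (Sum.inl ()) + Pi.single (Sum.inl ()) 1) := by
    ext i j
    rcases i with _ | i
    · rw [Matrix.updateRow_self]
      rcases j with _ | j
      · simp [hM, tog, Pi.single_apply]
      · have hj : (j.1 : V) ≠ u := fun h => hus (h ▸ j.2)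
        simp [hM, hR, tog, hj, Pi.single_apply]
    · rw [Matrix.updateRow_ne (by simp)]
      rcases j with _ | j
      · have hi : (i.1 : V) ≠ u := fun h => hus (h ▸ i.2)
        simp [hM, hC, tog, hi]
      · have hi : (i.1 : V) ≠ u := fun h => hus (h ▸ i.2)
        simp [hM, pSub, tog, hi]
  rw [h1, Matrix.det_updateRow_add, Matrix.updateRow_eq_self]
  congr 1
  have h2 : Matrix.updateRow M (Sum.inl ()) (Pi.single (Sum.inl ()) 1)
      = fromBlocks (1 : Matrix Unit Unit F) 0 C (pSub B s) := by
    ext i j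
    rcases i with _ | i
    · rw [Matrix.updateRow_self]
      rcases j with _ | j
      · simp [Matrix.one_apply, Pi.single_apply]
      · simp [Pi.single_apply]
    · rw [Matrix.updateRow_ne (by simp)]
      rcases j with _ | j <;> rfl
  rw [h2, det_fromBlocks_zero₁₂, det_one, one_mul]

/-! ### the operations on MA -/

lemma MA_ppt {B : Matrix V V F} {u : V} (hu : B u u = 1) :
    MA (ppt u B) = pivotOp (MA B) {u} := by
  ext Z
  rw [mem_MA, mem_pivot, mem_MA]
  by_cases hZ : u ∈ Z
  · obtain ⟨s, hus, rfl⟩ : ∃ s, u ∉ s ∧ Z = insert u s :=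
      ⟨Z.erase u, Finset.notMem_erase u Z, (Finset.insert_erase hZ).symm⟩
    rw [det_ppt_insert B hu hus, sd_insert hus]
  · rw [sd_single_notMem hZ, det_ppt_notMem B hu hZ]

lemma MA_tog {B : Matrix V V F} (hB : Herm B) (u : V) :
    MA (tog u B) = loopC (MA B) u := by
  ext Z
  by_cases hZ : u ∈ Z
  · obtain ⟨s, hus, rfl⟩ : ∃ s, u ∉ s ∧ Z = insert u s :=
      ⟨Z.erase u, Finset.notMem_erase u Z, (Finset.insert_erase hZ).symm⟩
    rw [mem_MA, mem_loopC, det_tog_insert B u hus]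
    simp only [mem_MA, Finset.erase_insert hus, Finset.mem_insert_self, true_and]
    rcases hB.det01 (insert u s) with h1 | h1 <;> rcases hB.det01 s with h2 | h2 <;>
      simp [h1, h2, Fadd_self]
  · rw [mem_MA, pSub_tog hZ, ← mem_MA]
    simp [mem_loopC, hZ]

/-! ### pair pivot via the six-step chain -/

lemma pair_pivot {B : Matrix V V F} (hB : Herm B) {x y : V} (hxy : x ≠ y)
    (hx : B x x = 0) (hy : B y y = 0) (hb : B x y ≠ 0) :
    ∃ C : Matrix V V F, Herm C ∧ MA C = pivotOp (MA B) {x, y} := by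
  have hyx : B y x = B x y ^ 2 := (hB y x).symm
  have hxy2 : B x y = B y x ^ 2 := (hB x y).symm
  -- step 1
  set B1 := tog x B with hB1
  have hH1 : Herm B1 := hB.tog x
  have h1x : B1 x x = 1 := by rw [hB1, tog_diag, hx, zero_add]
  -- step 2
  set B2 := ppt x B1 with hB2
  have hH2 : Herm B2 := hH1.ppt h1x
  have hB1xy : B1 x y = B x y := by simp [hB1, tog, Ne.symm hxy]
  have hB1yx : B1 y x = B y x := by simp [hB1, tog, Ne.symm hxy]
  have hB1yy : B1 y y = B y y := by simp [hB1, tog, Ne.symm hxy]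
  have papp1 : ∀ a b, B2 a b
      = if a = x then (if b = x then 1 else B1 x b)
        else if b = x then B1 a x else B1 a b + B1 a x * B1 x b := fun _ _ => rfl
  have h2yy : B2 y y = 1 := by
    rw [papp1, if_neg (Ne.symm hxy), if_neg (Ne.symm hxy), hB1yy, hB1yx, hB1xy, hy, zero_add,
      hyx, ← pow_succ]
    exact Fcube hb
  have h2xx : B2 x x = 1 := by
    rw [papp1, if_pos rfl, if_pos rfl]
  have h2xy : B2 x y = B x y := by
    rw [papp1, if_pos rfl, if_neg (Ne.symm hxy), hB1xy]
  have h2yx : B2 y x = B y x := by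
    rw [papp1, if_neg (Ne.symm hxy), if_pos rfl, hB1yx]
  -- step 3
  set B3 := tog x B2 with hB3
  have hH3 : Herm B3 := hH2.tog x
  have h3yy : B3 y y = 1 := by simp [hB3, tog, Ne.symm hxy, h2yy]
  have h3xx : B3 x x = 0 := by rw [hB3, tog_diag, h2xx, Fadd_self]
  have h3xy : B3 x y = B x y := by simp [hB3, tog, Ne.symm hxy, h2xy]
  have h3yx : B3 y x = B y x := by simp [hB3, tog, Ne.symm hxy, h2yx]
  -- step 4
  set B4 := ppt y B3 with hB4
  have hH4 : Herm B4 := hH3.ppt h3yy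
  have papp3 : ∀ a b, B4 a b
      = if a = y then (if b = y then 1 else B3 y b)
        else if b = y then B3 a y else B3 a b + B3 a y * B3 y b := fun _ _ => rfl
  have h4xx : B4 x x = 1 := by
    rw [papp3, if_neg hxy, if_neg hxy, h3xx, zero_add, h3xy, h3yx, hyx, ← pow_succ']
    exact Fcube hb
  -- step 5
  set B5 := ppt x B4 with hB5
  have hH5 : Herm B5 := hH4.ppt h4xx
  -- step 6
  set C := tog x B5 with hC
  refine ⟨C, hH5.tog x, ?_⟩
  rw [hC, MA_tog hH5 x, hB5, MA_ppt h4xx, hB4, MA_ppt h3yy, hB3, MA_tog hH2 x,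
    hB2, MA_ppt h1x, hB1, MA_tog hB x]
  exact six_op (MA B) hxy

/-! ### representation is closed under single vertex flips -/

lemma rep_flips (φ : List (V ⊕ V)) :
    ∀ (B : Matrix V V F), Herm B → ∀ W : Finset V,
    ∃ (C : Matrix V V F) (W' : Finset V), Herm C ∧
      applyFlips (pivotOp (MA B) W) φ = pivotOp (MA C) W' := by
  induction φ with
  | nil => exact fun B hB W => ⟨B, W, hB, rfl⟩
  | cons op φ ih =>
    intro B hB W
    rcases op with u | u
    · have hstep : applyFlips (pivotOp (MA B) W) (Sum.inl u :: φ)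
          = applyFlips (pivotOp (pivotOp (MA B) W) {u}) φ := rfl
      rw [hstep, pivot_pivot]
      exact ih B hB (W ∆ {u})
    · have hstep : applyFlips (pivotOp (MA B) W) (Sum.inr u :: φ)
          = applyFlips (loopC (pivotOp (MA B) W) u) φ := rfl
      rw [hstep]
      by_cases hu : u ∈ W
      · have hsplit : pivotOp (MA B) W = pivotOp (pivotOp (MA B) {u}) (W.erase u) := by
          rw [pivot_pivot, single_sd_erase hu]
        have hue : u ∉ W.erase u := Finset.notMem_erase u W
        rcases hB.diag u with h0 | h1
        · -- B u u = 0 : use the star_plus normal form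
          have htd : tog u B u u = 1 := by rw [tog_diag, h0, zero_add]
          have hH2 : Herm (ppt u (tog u B)) := (hB.tog u).ppt htd
          have key : loopC (pivotOp (MA B) {u}) u
              = pivotOp (MA (tog u (ppt u (tog u B)))) {u} := by
            rw [star_plus (MA B) u, ← MA_tog hB u, ← MA_ppt htd, ← MA_tog hH2 u]
          rw [hsplit, loopC_pivot_comm _ hue, key, pivot_pivot, single_sd_erase hu]
          exact ih _ (hH2.tog u) W
        · -- B u u = 1 : matrix pivot then toggle
          have hHp : Herm (ppt u B) := hB.ppt h1
          have key : loopC (pivotOp (MA B) {u}) u = MA (tog u (ppt u B)) := by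
            rw [← MA_ppt h1, MA_tog hHp u]
          rw [hsplit, loopC_pivot_comm _ hue, key]
          exact ih _ (hHp.tog u) (W.erase u)
      · rw [loopC_pivot_comm _ hu, ← MA_tog hB u]
        exact ih _ (hB.tog u) W

/-! ### the exchange axiom -/

def pairEquiv (u v : V) (huv : u ≠ v) : Fin 2 ≃ {x // x ∈ ({u, v} : Finset V)} where
  toFun i := if i = 0 then (⟨u, by simp⟩ : {x // x ∈ ({u, v} : Finset V)})
    else (⟨v, by simp⟩ : {x // x ∈ ({u, v} : Finset V)})
  invFun z := if z.1 = u then 0 else 1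
  left_inv i := by
    fin_cases i
    · simp
    · simp [Ne.symm huv]
  right_inv z := by
    rcases z with ⟨w, hw⟩
    rcases Finset.mem_insert.1 hw with h | h
    · subst h; simp
    · have h' : w = v := Finset.mem_singleton.1 h
      subst h'
      simp [Ne.symm huv]

lemma det_pair (B : Matrix V V F) {u v : V} (huv : u ≠ v) :
    (pSub B {u, v}).det = B u u * B v v - B u v * B v u := by
  rw [← Matrix.det_submatrix_equiv_self (pairEquiv u v huv), det_fin_two]
  simp [pairEquiv, pSub]

lemma singleton_det (B : Matrix V V F) (u : V) :
    (pSub B {u}).det = B u u := by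
  haveI : Subsingleton {x // x ∈ ({u} : Finset V)} := by
    constructor
    rintro ⟨a, ha⟩ ⟨b, hb⟩
    apply Subtype.ext
    show a = b
    rw [Finset.mem_singleton.1 ha, Finset.mem_singleton.1 hb]
  exact Matrix.det_eq_elem_of_subsingleton _ (⟨u, Finset.mem_singleton_self u⟩ : {x // x ∈ ({u} : Finset V)})

lemma MA_exchange (n : ℕ) (B : Matrix V V F) (hB : Herm B) :
    ∀ X ∈ MA B, X.card ≤ n → ∀ Y ∈ MA B, ∀ u ∈ X ∆ Y,
    X ∆ ({u} : Finset V) ∈ MA B ∨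
      ∃ v ∈ X ∆ Y, v ≠ u ∧ X ∆ ({u, v} : Finset V) ∈ MA B := by
  induction n generalizing B with
  | zero =>
    intro X hX hcard Y hY u hu
    have hX0 : X = ∅ := Finset.card_eq_zero.1 (Nat.le_zero.1 hcard)
    subst hX0
    rw [empty_sd] at hu
    rcases hB.diag u with h0 | h1
    · -- need a partner v in Y
      have huY : u ∈ Y := hu
      have hrow : ∃ j : {x // x ∈ Y}, B u j.1 ≠ 0 := by
        by_contra h
        push_neg at h
        exact (mem_MA.1 hY)
          (Matrix.det_eq_zero_of_row_eq_zero ⟨u, huY⟩ fun j => h j)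
      rcases hrow with ⟨⟨v, hvY⟩, hbv⟩
      have hvu : v ≠ u := by
        rintro rfl
        exact hbv h0
      right
      refine ⟨v, by rwa [empty_sd], hvu, ?_⟩
      rw [empty_sd, mem_MA, det_pair B (Ne.symm hvu)]
      have hvusq : B v u = B u v ^ 2 := (hB v u).symm
      rw [h0, zero_mul, hvusq, zero_sub, ← pow_succ', Fcube hbv, Fneg]
      exact one_ne_zero
    · left
      rw [empty_sd, mem_MA, singleton_det, h1]
      exact one_ne_zero
  | succ n ih =>
    intro X hX hcard Y hY u hu
    by_cases hn : X.card ≤ n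
    · exact ih B hB X hX hn Y hY u hu
    have hXne : X.Nonempty := by
      rcases Finset.eq_empty_or_nonempty X with h | h
      · exfalso; apply hn; simp [h]
      · exact h
    by_cases hdiag : ∃ x ∈ X, B x x = 1
    · rcases hdiag with ⟨x, hxX, hx1⟩
      have hMA : MA (ppt x B) = pivotOp (MA B) {x} := MA_ppt hx1
      have hmem : ∀ Z : Finset V, Z ∈ MA (ppt x B) ↔ Z ∆ {x} ∈ MA B := fun Z => by
        rw [hMA, mem_pivot]
      have hX' : X ∆ {x} ∈ MA (ppt x B) := (hmem _).2 (by rwa [sd_cancel])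
      have hY' : Y ∆ {x} ∈ MA (ppt x B) := (hmem _).2 (by rwa [sd_cancel])
      have hcard' : (X ∆ ({x} : Finset V)).card ≤ n := by
        rw [sd_single_mem hxX, Finset.card_erase_of_mem hxX]
        exact Nat.sub_le_sub_right hcard 1
      have hu' : u ∈ (X ∆ {x}) ∆ (Y ∆ {x}) := by rwa [sdd]
      rcases ih (ppt x B) (hB.ppt hx1) _ hX' hcard' _ hY' u hu' with h | ⟨v, hv, hvu, h⟩
      · left
        have h2 := (hmem _).1 h
        rwa [sd_rot] at h2
      · right
        refine ⟨v, by rwa [sdd] at hv, hvu, ?_⟩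
        have h2 := (hmem _).1 h
        rwa [sd_rot] at h2
    · push_neg at hdiag
      rcases hXne with ⟨x, hxX⟩
      have hx0 : B x x = 0 := (hB.diag x).resolve_right (hdiag x hxX)
      have hrow : ∃ j : {a // a ∈ X}, B x j.1 ≠ 0 := by
        by_contra h
        push_neg at h
        exact (mem_MA.1 hX)
          (Matrix.det_eq_zero_of_row_eq_zero ⟨x, hxX⟩ fun j => h j)
      rcases hrow with ⟨⟨y, hyX⟩, hby⟩
      have hxy : x ≠ y := by
        rintro rfl
        exact hby hx0
      have hy0 : B y y = 0 := (hB.diag y).resolve_right (hdiag y hyX)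
      rcases pair_pivot hB hxy hx0 hy0 hby with ⟨C, hC, hMA⟩
      have hmem : ∀ Z : Finset V, Z ∈ MA C ↔ Z ∆ {x, y} ∈ MA B := fun Z => by
        rw [hMA, mem_pivot]
      have hX' : X ∆ {x, y} ∈ MA C := (hmem _).2 (by rwa [sd_cancel])
      have hY' : Y ∆ {x, y} ∈ MA C := (hmem _).2 (by rwa [sd_cancel])
      have hcard' : (X ∆ ({x, y} : Finset V)).card ≤ n := by
        have hsub : X ∆ ({x, y} : Finset V) ⊆ X.erase x := by
          intro a ha
          rw [Finset.mem_symmDiff] at ha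
          rcases ha with ⟨haX, hap⟩ | ⟨hap, haX⟩
          · rw [Finset.mem_erase]
            refine ⟨?_, haX⟩
            rintro rfl
            exact hap (by simp)
          · exfalso
            rcases Finset.mem_insert.1 hap with rfl | h'
            · exact haX hxX
            · rw [Finset.mem_singleton.1 h'] at haX
              exact haX hyX
        calc (X ∆ ({x, y} : Finset V)).card ≤ (X.erase x).card :=
              Finset.card_le_card hsub
        _ = X.card - 1 := Finset.card_erase_of_mem hxX
        _ ≤ n := Nat.sub_le_sub_right hcard 1
      have hu' : u ∈ (X ∆ {x, y}) ∆ (Y ∆ {x, y}) := by rwa [sdd]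
      rcases ih C hC _ hX' hcard' _ hY' u hu' with h | ⟨v, hv, hvu, h⟩
      · left
        have h2 := (hmem _).1 h
        rwa [sd_rot] at h2
      · right
        refine ⟨v, by rwa [sdd] at hv, hvu, ?_⟩
        have h2 := (hmem _).1 h
        rwa [sd_rot] at h2

lemma MA_empty_mem (B : Matrix V V F) : (∅ : Finset V) ∈ MA B := by
  rw [mem_MA]
  haveI : IsEmpty {x // x ∈ (∅ : Finset V)} :=
    ⟨fun x => absurd x.2 (Finset.notMem_empty x.1)⟩
  rw [Matrix.det_isEmpty]
  exact one_ne_zero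

lemma MA_delta {B : Matrix V V F} (hB : Herm B) : IsDeltaMatroid (MA B) :=
  ⟨⟨∅, MA_empty_mem B⟩, fun X hX Y hY u hu =>
    MA_exchange X.card B hB X hX le_rfl Y hY u hu⟩

lemma pivot_delta {E : Finset (Finset V)} (h : IsDeltaMatroid E) (W : Finset V) :
    IsDeltaMatroid (pivotOp E W) := by
  obtain ⟨⟨Z, hZ⟩, hex⟩ := h
  refine ⟨⟨Z ∆ W, mem_pivot.2 (by rwa [sd_cancel])⟩, ?_⟩
  intro X hX Y hY u hu
  have hu' : u ∈ (X ∆ W) ∆ (Y ∆ W) := by rwa [sdd]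
  rcases hex _ (mem_pivot.1 hX) _ (mem_pivot.1 hY) u hu' with h | ⟨v, hv, hvu, h⟩
  · left
    apply mem_pivot.2
    rwa [sd_right_comm] at h
  · right
    refine ⟨v, by rwa [sdd] at hv, hvu, ?_⟩
    apply mem_pivot.2
    rwa [sd_right_comm] at h

end DM

/-- the family of delta-matroids inv-representable over GF(4)
is closed under vertex flips, and every vertex-flip image is a delta-matroid. -/
theorem invRepresentable_vf_closed
    (A : Matrix V V (GaloisField 2 2)) (hA : InvSymm A) (X : Finset V)
    (φ : List (V ⊕ V)) :
    (∃ (A' : Matrix V V (GaloisField 2 2)) (W : Finset V), InvSymm A' ∧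
      applyFlips (pivotOp (MA A) X) φ = pivotOp (MA A') W) ∧
    IsDeltaMatroid (applyFlips (pivotOp (MA A) X) φ) := by
  obtain ⟨C, W, hC, heq⟩ := DM.rep_flips φ A (DM.herm_of_invSymm hA) X
  refine ⟨⟨C, W, DM.invSymm_of_herm hC, heq⟩, ?_⟩
  rw [heq]
  exact DM.pivot_delta (DM.MA_delta hC) W
end

section
/- Every quaternary matroid (matroid representable over GF(4)), viewed as the set system of its bases, is vertex-flip-safe: for any sequence of pivots and loop complementations applied to it, the result is a delta-matroid. -/
open Matrix
open scoped symmDiff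

variable {V : Type} [Fintype V] [DecidableEq V]

/-- the columns of A indexed by Y are linearly independent -/
def ColIndep {W F : Type} [Field F] [Fintype W] (A : Matrix W V F) (Y : Finset V) : Prop :=
  LinearIndependent F (fun y : Y => (Aᵀ y.1 : W → F))

open scoped Classical in
/-- the bases (maximal column-independent sets) of the column matroid of A -/
noncomputable def colBases {W F : Type} [Field F] [Fintype W] (A : Matrix W V F) :
    Finset (Finset V) :=
  Finset.univ.filter (fun Y => ColIndep A Y ∧ ∀ Z, Y ⊆ Z → ColIndep A Z → Y = Z)

set_option linter.unusedSectionVars false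
set_option maxHeartbeats 1000000

open Polynomial

local notation "F4" => GaloisField 2 2

noncomputable instance : Fintype (GaloisField 2 2) := Fintype.ofFinite _

noncomputable def sg : GaloisField 2 2 →+* GaloisField 2 2 := frobenius (GaloisField 2 2) 2

lemma sg_apply (x : F4) : sg x = x ^ 2 := frobenius_def 2 x
lemma sg_sg (x : F4) : sg (sg x) = x := by
  have h4 : Fintype.card F4 = 4 := by
    have := GaloisField.card 2 2 (by norm_num)
    rwa [Nat.card_eq_fintype_card] at this
  rw [sg_apply, sg_apply, ← pow_mul]
  have := FiniteField.pow_card (x : F4)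
  rw [h4] at this
  simpa using this

lemma sg_zero_iff (x : F4) : sg x = 0 ↔ x = 0 := by
  constructor
  · intro h; rw [sg_apply] at h; exact pow_eq_zero_iff (by norm_num) |>.mp h
  · intro h; simp [h]

lemma gf2val {x : F4} (h : sg x = x) : x = 0 ∨ x = 1 := by
  rw [sg_apply] at h
  have : x * (x - 1) = 0 := by ring_nf; linear_combination h
  rcases mul_eq_zero.mp this with h1 | h1
  · exact Or.inl h1
  · exact Or.inr (by linear_combination h1)

/-- generic determinant identity: `det (P + QA) = det (P + AQ)` for diagonal `P Q`. -/
lemma det_diag_add_comm {K : Type} [Field K] (p q : V → K) (A : Matrix V V K) :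
    (Matrix.diagonal p + Matrix.diagonal q * A).det
      = (Matrix.diagonal p + A * Matrix.diagonal q).det := by
  classical
  set f : Polynomial K →+* K := Polynomial.evalRingHom 0 with hf
  set D : Matrix V V (Polynomial K) := Matrix.diagonal (fun i => Polynomial.X + Polynomial.C (q i)) with hD
  set P' : Matrix V V (Polynomial K) := Matrix.diagonal (fun i => Polynomial.C (p i)) with hP
  set A' : Matrix V V (Polynomial K) := A.map Polynomial.C with hA
  have hcomm : D * (P' + A' * D) = (P' + D * A') * D := by
    rw [mul_add, add_mul, Matrix.diagonal_mul_diagonal, Matrix.diagonal_mul_diagonal, mul_assoc]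
    congr 2
    funext i; exact mul_comm _ _
  have hdet : D.det ≠ 0 := by
    rw [hD, Matrix.det_diagonal]
    exact Finset.prod_ne_zero_iff.mpr fun i _ => Polynomial.X_add_C_ne_zero (q i)
  have hmain : (P' + A' * D).det = (P' + D * A').det := by
    have h := congrArg Matrix.det hcomm
    rw [Matrix.det_mul, Matrix.det_mul] at h
    apply mul_left_cancel₀ hdet
    rw [h, mul_comm]
  have happ := congrArg f hmain
  rw [RingHom.map_det, RingHom.map_det] at happ
  have e1 : f.mapMatrix (P' + A' * D) = Matrix.diagonal p + A * Matrix.diagonal q := by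
    rw [_root_.map_add, _root_.map_mul]
    congr 1
    · simp only [RingHom.mapMatrix_apply, hP]
      rw [Matrix.diagonal_map (by simp)]
      simp [f]
    · congr 1
      · simp only [RingHom.mapMatrix_apply, hA, Matrix.map_map]
        ext i j; simp [f]
      · simp only [RingHom.mapMatrix_apply, hD]
        rw [Matrix.diagonal_map (by simp)]
        simp [f]
  have e2 : f.mapMatrix (P' + D * A') = Matrix.diagonal p + Matrix.diagonal q * A := by
    rw [_root_.map_add, _root_.map_mul]
    congr 1
    · simp only [RingHom.mapMatrix_apply, hP]
      rw [Matrix.diagonal_map (by simp)]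
      simp [f]
    · congr 1
      · simp only [RingHom.mapMatrix_apply, hD]
        rw [Matrix.diagonal_map (by simp)]
        simp [f]
      · simp only [RingHom.mapMatrix_apply, hA, Matrix.map_map]
        ext i j; simp [f]
  rw [e1, e2] at happ
  exact happ.symm

-- ===== chunk 2 =====

lemma invSymm_apply {A : Matrix V V F4} (hA : InvSymm A) (i j : V) : sg (A i j) = A j i := by
  have := hA j i
  rw [Matrix.transpose_apply, CharTwo.neg_eq] at this
  rw [sg_apply, this]

lemma invSymm_map {A : Matrix V V F4} (hA : InvSymm A) : A.map sg = Aᵀ := by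
  ext i j; simp [Matrix.map_apply, invSymm_apply hA]

noncomputable def cov : Fin 3 → F4 × F4 := ![(1,0),(0,1),(1,1)]

lemma sg_cov1 (s : Fin 3) : sg (cov s).1 = (cov s).1 := by
  fin_cases s <;> simp [cov]

lemma sg_cov2 (s : Fin 3) : sg (cov s).2 = (cov s).2 := by
  fin_cases s <;> simp [cov]

def thirdSt (p : Fin 3 × Fin 3) : Fin 3 :=
  if p.1 ≠ 0 ∧ p.2 ≠ 0 then 0 else if p.1 ≠ 1 ∧ p.2 ≠ 1 then 1 else 2

lemma cov_third {a b : Fin 3} (h : a ≠ b) :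
    cov (thirdSt (a, b)) = ((cov a).1 + (cov b).1, (cov a).2 + (cov b).2) := by
  have h2 : (1 : F4) + 1 = 0 := CharTwo.add_self_eq_zero 1
  fin_cases a <;> fin_cases b <;>
    first
      | exact absurd rfl h
      | (apply Prod.ext <;> simp [cov, thirdSt, h2])

lemma thirdSt_ne_fst {p : Fin 3 × Fin 3} (h : p.1 ≠ p.2) : thirdSt p ≠ p.1 := by
  revert h; revert p; decide

lemma thirdSt_ne_snd {p : Fin 3 × Fin 3} (h : p.1 ≠ p.2) : thirdSt p ≠ p.2 := by
  revert h; revert p; decide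

def stateAt (c : V → Fin 3 × Fin 3) (Z : Finset V) (u : V) : Fin 3 :=
  if u ∈ Z then (c u).2 else (c u).1

noncomputable def Cmat (A : Matrix V V F4) (c : V → Fin 3 × Fin 3) (Z : Finset V) :
    Matrix V V F4 :=
  Matrix.diagonal (fun i => (cov (stateAt c Z i)).1)
    + Matrix.diagonal (fun i => (cov (stateAt c Z i)).2) * A

lemma Cmat_apply (A : Matrix V V F4) (c : V → Fin 3 × Fin 3) (Z : Finset V) (i j : V) :
    Cmat A c Z i j = (if i = j then (cov (stateAt c Z i)).1 else 0)
      + (cov (stateAt c Z i)).2 * A i j := by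
  simp [Cmat, Matrix.diagonal, Matrix.add_apply, Matrix.mul_apply, Finset.sum_ite_eq,
    Matrix.of_apply]

lemma det_Cmat_fixed {A : Matrix V V F4} (hA : InvSymm A) (c : V → Fin 3 × Fin 3)
    (Z : Finset V) : sg ((Cmat A c Z).det) = (Cmat A c Z).det := by
  rw [RingHom.map_det]
  have e : sg.mapMatrix (Cmat A c Z)
      = Matrix.diagonal (fun i => (cov (stateAt c Z i)).1)
        + Matrix.diagonal (fun i => (cov (stateAt c Z i)).2) * Aᵀ := by
    rw [Cmat, _root_.map_add, _root_.map_mul]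
    congr 1
    · simp only [RingHom.mapMatrix_apply]
      rw [Matrix.diagonal_map (by simp)]
      simp [sg_cov1]
    · congr 1
      · simp only [RingHom.mapMatrix_apply]
        rw [Matrix.diagonal_map (by simp)]
        simp [sg_cov2]
      · simp only [RingHom.mapMatrix_apply]
        exact invSymm_map hA
  rw [e]
  have e2 : (Matrix.diagonal (fun i => (cov (stateAt c Z i)).1)
        + Matrix.diagonal (fun i => (cov (stateAt c Z i)).2) * Aᵀ)
      = (Matrix.diagonal (fun i => (cov (stateAt c Z i)).1)
        + A * Matrix.diagonal (fun i => (cov (stateAt c Z i)).2))ᵀ := by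
    rw [Matrix.transpose_add, Matrix.transpose_mul, Matrix.diagonal_transpose,
      Matrix.diagonal_transpose]
  rw [e2, Matrix.det_transpose, ← det_diag_add_comm]
  rfl

lemma det_Cmat_01 {A : Matrix V V F4} (hA : InvSymm A) (c : V → Fin 3 × Fin 3)
    (Z : Finset V) : (Cmat A c Z).det = 0 ∨ (Cmat A c Z).det = 1 :=
  gf2val (det_Cmat_fixed hA c Z)

open scoped Classical in
noncomputable def suppSet (A : Matrix V V F4) (c : V → Fin 3 × Fin 3) : Finset (Finset V) :=
  Finset.univ.filter (fun Z => (Cmat A c Z).det ≠ 0)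

open scoped Classical in
lemma mem_suppSet {A : Matrix V V F4} {c : V → Fin 3 × Fin 3} {Z : Finset V} :
    Z ∈ suppSet A c ↔ (Cmat A c Z).det ≠ 0 := by
  simp [suppSet]

def RepSys (E : Finset (Finset V)) : Prop :=
  ∃ (A : Matrix V V F4) (c : V → Fin 3 × Fin 3),
    InvSymm A ∧ (∀ u, (c u).1 ≠ (c u).2) ∧ E = suppSet A c

-- membership lemmas for the operations

lemma mem_pivotOp {E : Finset (Finset V)} {X Z : Finset V} :
    Z ∈ pivotOp E X ↔ Z ∆ X ∈ E := by
  constructor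
  · rintro h
    rcases Finset.mem_image.mp h with ⟨Y, hY, rfl⟩
    rwa [symmDiff_symmDiff_cancel_right]
  · intro h
    exact Finset.mem_image.mpr ⟨Z ∆ X, h, by rw [symmDiff_symmDiff_cancel_right]⟩

lemma mem_insert_image {E : Finset (Finset V)} {u : V} {Z : Finset V} :
    Z ∈ (E.filter (fun Y => u ∉ Y)).image (fun Y => insert u Y)
      ↔ u ∈ Z ∧ Z.erase u ∈ E := by
  constructor
  · rintro h
    rcases Finset.mem_image.mp h with ⟨Y, hY, rfl⟩
    rcases Finset.mem_filter.mp hY with ⟨hYE, hu⟩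
    exact ⟨Finset.mem_insert_self u Y, by rwa [Finset.erase_insert hu]⟩
  · rintro ⟨hu, hE⟩
    exact Finset.mem_image.mpr ⟨Z.erase u,
      Finset.mem_filter.mpr ⟨hE, Finset.notMem_erase u Z⟩, Finset.insert_erase hu⟩

lemma mem_loopC {E : Finset (Finset V)} {u : V} {Z : Finset V} :
    Z ∈ loopC E u ↔ Xor' (Z ∈ E) (u ∈ Z ∧ Z.erase u ∈ E) := by
  rw [loopC, Finset.mem_symmDiff]
  rw [Xor']
  constructor
  · rintro (⟨h1, h2⟩ | ⟨h1, h2⟩)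
    · exact Or.inl ⟨h1, fun h => h2 (mem_insert_image.mpr h)⟩
    · exact Or.inr ⟨mem_insert_image.mp h1, h2⟩
  · rintro (⟨h1, h2⟩ | ⟨h1, h2⟩)
    · exact Or.inl ⟨h1, fun h => h2 (mem_insert_image.mp h)⟩
    · exact Or.inr ⟨mem_insert_image.mpr h1, h2⟩

-- nonemptiness preservation

lemma pivotOp_nonempty {E : Finset (Finset V)} {X : Finset V} (h : E.Nonempty) :
    (pivotOp E X).Nonempty := h.image _

lemma loopC_nonempty {E : Finset (Finset V)} {u : V} (h : E.Nonempty) :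
    (loopC E u).Nonempty := by
  by_contra hc
  rw [Finset.not_nonempty_iff_eq_empty] at hc
  have hES : E = (E.filter (fun Y => u ∉ Y)).image (fun Y => insert u Y) := by
    have := symmDiff_eq_bot.mp (by exact_mod_cast hc)
    exact this
  have hall : ∀ Y ∈ E, u ∈ Y := by
    intro Y hY
    rw [hES] at hY
    exact (mem_insert_image.mp hY).1
  have : E.filter (fun Y => u ∉ Y) = ∅ := by
    rw [Finset.filter_eq_empty_iff]
    intro Y hY
    simp [hall Y hY]
  rw [this] at hES
  simp at hES
  exact Finset.not_nonempty_empty (hES ▸ h)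

-- state transformations

def swapC (c : V → Fin 3 × Fin 3) (X : Finset V) : V → Fin 3 × Fin 3 :=
  fun u => if u ∈ X then ((c u).2, (c u).1) else c u

def loopSt (c : V → Fin 3 × Fin 3) (u : V) : V → Fin 3 × Fin 3 :=
  fun v => if v = u then ((c v).1, thirdSt (c v)) else c v

lemma swapC_distinct {c : V → Fin 3 × Fin 3} (hc : ∀ u, (c u).1 ≠ (c u).2) (X : Finset V) :
    ∀ u, ((swapC c X u).1 ≠ (swapC c X u).2) := by
  intro u; unfold swapC; by_cases h : u ∈ X <;> simp [h, hc u, (hc u).symm]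

lemma loopSt_distinct {c : V → Fin 3 × Fin 3} (hc : ∀ u, (c u).1 ≠ (c u).2) (u : V) :
    ∀ v, ((loopSt c u v).1 ≠ (loopSt c u v).2) := by
  intro v; unfold loopSt
  by_cases h : v = u
  · subst h
    simp only [if_pos rfl]
    intro hh
    exact (thirdSt_ne_fst (hc v)) hh.symm
  · simp [h, hc v]

lemma Cmat_swapC (A : Matrix V V F4) (c : V → Fin 3 × Fin 3) (X Z : Finset V) :
    Cmat A (swapC c X) Z = Cmat A c (Z ∆ X) := by
  have hs : stateAt (swapC c X) Z = stateAt c (Z ∆ X) := by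
    funext u
    unfold stateAt swapC
    by_cases hX : u ∈ X <;> by_cases hZ : u ∈ Z <;>
      simp [hX, hZ, Finset.mem_symmDiff]
  unfold Cmat; rw [hs]

lemma suppSet_swapC {A : Matrix V V F4} (c : V → Fin 3 × Fin 3) (X : Finset V) :
    suppSet A (swapC c X) = pivotOp (suppSet A c) X := by
  ext Z
  rw [mem_suppSet, mem_pivotOp, mem_suppSet, Cmat_swapC]

-- the loop complementation determinant identity

lemma Cmat_loopSt_notmem (A : Matrix V V F4) (c : V → Fin 3 × Fin 3) {u : V} {Z : Finset V}
    (hu : u ∉ Z) : Cmat A (loopSt c u) Z = Cmat A c Z := by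
  have hs : stateAt (loopSt c u) Z = stateAt c Z := by
    funext v
    unfold stateAt loopSt
    by_cases hv : v = u
    · subst hv; simp [hu]
    · simp [hv]
  unfold Cmat; rw [hs]

lemma Cmat_row (A : Matrix V V F4) (c : V → Fin 3 × Fin 3) (Z : Finset V) (i : V) :
    Cmat A c Z i = fun j => (if i = j then (cov (stateAt c Z i)).1 else 0)
      + (cov (stateAt c Z i)).2 * A i j := by
  funext j; exact Cmat_apply A c Z i j

lemma det_Cmat_loopSt_mem (A : Matrix V V F4) {c : V → Fin 3 × Fin 3}
    (hc : ∀ v, (c v).1 ≠ (c v).2) {u : V} {Z : Finset V} (hu : u ∈ Z) :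
    (Cmat A (loopSt c u) Z).det = (Cmat A c Z).det + (Cmat A c (Z.erase u)).det := by
  set M := Cmat A c Z with hM
  set M' := Cmat A c (Z.erase u) with hM'
  have hrow : ∀ v, v ≠ u → M v = M' v := by
    intro v hv
    rw [hM, hM', Cmat_row, Cmat_row]
    have : stateAt c Z v = stateAt c (Z.erase u) v := by
      simp [stateAt, Finset.mem_erase, hv]
    rw [this]
  have hstate : stateAt (loopSt c u) Z u = thirdSt (c u) := by
    unfold stateAt loopSt; simp [hu]
  have hstateZ : stateAt c Z u = (c u).2 := by unfold stateAt; simp [hu]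
  have hstateZ' : stateAt c (Z.erase u) u = (c u).1 := by
    unfold stateAt; simp [Finset.notMem_erase]
  have key : Cmat A (loopSt c u) Z = M.updateRow u (M u + M' u) := by
    ext i j
    by_cases hi : i = u
    · rw [hi, Matrix.updateRow_self]
      rw [Cmat_apply]
      have hsv : stateAt (loopSt c u) Z u = thirdSt ((c u).1, (c u).2) := hstate
      rw [hsv, cov_third (hc u)]
      simp only [Pi.add_apply]
      rw [hM, hM', Cmat_apply, Cmat_apply, hstateZ, hstateZ']
      by_cases huj : u = j <;> simp [huj] <;> ring
    · rw [Matrix.updateRow_ne hi]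
      rw [hM, Cmat_apply, Cmat_apply]
      have : stateAt (loopSt c u) Z i = stateAt c Z i := by
        unfold stateAt loopSt; simp [hi]
      rw [this]
  rw [key, Matrix.det_updateRow_add]
  congr 1
  · rw [Matrix.updateRow_eq_self]
  · have : M.updateRow u (M' u) = M' := by
      ext i j
      by_cases hi : i = u
      · subst hi; rw [Matrix.updateRow_self]
      · rw [Matrix.updateRow_ne hi, hrow i hi]
    rw [this]

lemma suppSet_loopSt {A : Matrix V V F4} {c : V → Fin 3 × Fin 3} (hA : InvSymm A)
    (hc : ∀ v, (c v).1 ≠ (c v).2) (u : V) :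
    suppSet A (loopSt c u) = loopC (suppSet A c) u := by
  ext Z
  rw [mem_suppSet, mem_loopC, mem_suppSet]
  by_cases hu : u ∈ Z
  · rw [det_Cmat_loopSt_mem A hc hu]
    have hmem : (Z.erase u ∈ suppSet A c) ↔ (Cmat A c (Z.erase u)).det ≠ 0 := mem_suppSet
    rcases det_Cmat_01 hA c Z with h1 | h1 <;>
      rcases det_Cmat_01 hA c (Z.erase u) with h2 | h2 <;>
        rw [h1, h2] <;>
          simp [Xor', hu, hmem, h2, CharTwo.add_self_eq_zero]
  · rw [Cmat_loopSt_notmem A c hu]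
    simp [Xor', hu]

-- ===== chunk 3 : normalization and the core exchange property =====

lemma det_unitRows {K : Type} [Field K] (D : Finset V) (M : Matrix V V K)
    (h : ∀ u, u ∉ D → M u = Pi.single u 1) :
    M.det = (pSub M D).det := by
  classical
  rw [← Matrix.det_submatrix_equiv_self (Equiv.sumCompl (fun x : V => x ∈ D)) M]
  have hblock : M.submatrix (Equiv.sumCompl (fun x : V => x ∈ D))
        (Equiv.sumCompl (fun x : V => x ∈ D)) =
      Matrix.fromBlocks (pSub M D)
        (Matrix.of fun (i : D) (j : {x : V // ¬ x ∈ D}) => M i.1 j.1) 0 1 := by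
    ext i j
    rcases i with i | i <;> rcases j with j | j
    · simp [pSub]
    · simp [pSub]
    · have hz := h i.1 i.2
      simp only [Matrix.submatrix_apply, Equiv.sumCompl_apply_inr,
        Equiv.sumCompl_apply_inl, hz, Matrix.fromBlocks_apply₂₁]
      have hne : j.1 ≠ i.1 := fun hcc => i.2 (hcc ▸ j.2)
      simp [Pi.single_apply, hne.symm]
    · have hz := h i.1 i.2
      simp only [Matrix.submatrix_apply, Equiv.sumCompl_apply_inr, hz,
        Matrix.fromBlocks_apply₂₂]
      simp [Pi.single_apply, Matrix.one_apply, Subtype.ext_iff, eq_comm]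
  rw [hblock, Matrix.det_fromBlocks_zero₂₁, Matrix.det_one, mul_one]

section Core

variable {A : Matrix V V (GaloisField 2 2)} {c : V → Fin 3 × Fin 3}

lemma cov_cross {a b : Fin 3} (h : a ≠ b) :
    (cov a).1 * (cov b).2 + (cov a).2 * (cov b).1 = 1 := by
  have h2 : (1 : F4) + 1 = 0 := CharTwo.add_self_eq_zero 1
  fin_cases a <;> fin_cases b <;>
    first
      | exact absurd rfl h
      | simp [cov, h2]

lemma char2_eq_of_add_eq_zero {x y : F4} (h : x + y = 0) : x = y := by
  have hy : -y = y := CharTwo.neg_eq y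
  linear_combination h + hy

/-- the key Hermitian identity -/
lemma herm_key (hA : InvSymm A) (hc : ∀ v, (c v).1 ≠ (c v).2) :
    (Cmat A c ∅)ᵀ * ((Cmat A c Finset.univ).map sg)
      = (Cmat A c Finset.univ)ᵀ * ((Cmat A c ∅).map sg) := by
  ext i j
  simp only [Matrix.mul_apply, Matrix.transpose_apply, Matrix.map_apply]
  apply char2_eq_of_add_eq_zero
  rw [← Finset.sum_add_distrib]
  have hpoint : ∀ u : V,
      Cmat A c ∅ u i * sg (Cmat A c Finset.univ u j)
        + Cmat A c Finset.univ u i * sg (Cmat A c ∅ u j)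
      = (if u = i then 1 else 0) * sg (A u j) + (if u = j then 1 else 0) * A u i := by
    intro u
    have hs0 : stateAt c ∅ u = (c u).1 := by simp [stateAt]
    have hs1 : stateAt c Finset.univ u = (c u).2 := by simp [stateAt]
    rw [Cmat_apply, Cmat_apply, Cmat_apply, Cmat_apply, hs0, hs1]
    have h2 : (2 : F4) = 0 := CharTwo.two_eq_zero
    have hcross : (cov (c u).1).1 * (cov (c u).2).2 + (cov (c u).1).2 * (cov (c u).2).1 = 1 :=
      cov_cross (hc u)
    have hsg0 : sg ((if u = j then (cov (c u).1).1 else 0) + (cov (c u).1).2 * A u j)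
        = (if u = j then (cov (c u).1).1 else 0) + (cov (c u).1).2 * sg (A u j) := by
      rw [_root_.map_add, _root_.map_mul]
      congr 1
      · by_cases h : u = j <;> simp [h, sg_cov1]
      · rw [sg_cov2]
    have hsg1 : sg ((if u = j then (cov (c u).2).1 else 0) + (cov (c u).2).2 * A u j)
        = (if u = j then (cov (c u).2).1 else 0) + (cov (c u).2).2 * sg (A u j) := by
      rw [_root_.map_add, _root_.map_mul]
      congr 1
      · by_cases h : u = j <;> simp [h, sg_cov1]
      · rw [sg_cov2]
    rw [hsg0, hsg1]
    by_cases hui : u = i <;> by_cases huj : u = j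
    · simp only [if_pos hui, if_pos huj]
      linear_combination (A u i + sg (A u j)) * hcross
        + ((cov (c u).1).1 * (cov (c u).2).1
            + (cov (c u).1).2 * (cov (c u).2).2 * A u i * sg (A u j)) * h2
    · simp only [if_pos hui, if_neg huj]
      linear_combination sg (A u j) * hcross
        + ((cov (c u).1).2 * (cov (c u).2).2 * A u i * sg (A u j)) * h2
    · simp only [if_neg hui, if_pos huj]
      linear_combination A u i * hcross
        + ((cov (c u).1).2 * (cov (c u).2).2 * A u i * sg (A u j)) * h2
    · simp only [if_neg hui, if_neg huj]
      linear_combination ((cov (c u).1).2 * (cov (c u).2).2 * A u i * sg (A u j)) * h2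
  rw [Finset.sum_congr rfl (fun u _ => hpoint u)]
  rw [Finset.sum_add_distrib]
  have e1 : (∑ u : V, (if u = i then 1 else 0) * sg (A u j)) = sg (A i j) := by
    rw [Finset.sum_eq_single i]
    · simp
    · intro b _ hb; simp [hb]
    · intro h; exact absurd (Finset.mem_univ i) h
  have e2 : (∑ u : V, (if u = j then 1 else 0) * A u i) = A j i := by
    rw [Finset.sum_eq_single j]
    · simp
    · intro b _ hb; simp [hb]
    · intro h; exact absurd (Finset.mem_univ j) h
  rw [e1, e2, invSymm_apply hA]
  exact CharTwo.add_self_eq_zero _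

variable (A c) in
noncomputable def Bmat : Matrix V V (GaloisField 2 2) :=
  Cmat A c Finset.univ * (Cmat A c ∅)⁻¹

lemma Cmat_row_mem {Z : Finset V} {u : V} (hu : u ∈ Z) :
    Cmat A c Z u = Cmat A c Finset.univ u := by
  funext j
  rw [Cmat_apply, Cmat_apply]
  have : stateAt c Z u = stateAt c Finset.univ u := by simp [stateAt, hu]
  rw [this]

lemma Cmat_row_notmem {Z : Finset V} {u : V} (hu : u ∉ Z) :
    Cmat A c Z u = Cmat A c ∅ u := by
  funext j
  rw [Cmat_apply, Cmat_apply]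
  have : stateAt c Z u = stateAt c ∅ u := by simp [stateAt, hu]
  rw [this]

lemma row_mul (X Y : Matrix V V (GaloisField 2 2)) (u : V) :
    (X * Y) u = fun j => ∑ k, X u k * Y k j := by
  funext j; rw [Matrix.mul_apply]

lemma det_Cmat_eq_B (h0 : (Cmat A c ∅).det ≠ 0) (D : Finset V) :
    (Cmat A c D).det = (pSub (Bmat A c) D).det * (Cmat A c ∅).det := by
  classical
  set C0 := Cmat A c ∅ with hC0
  have hU : IsUnit C0.det := isUnit_iff_ne_zero.mpr h0
  set M := Cmat A c D * C0⁻¹ with hMdef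
  have hrow : ∀ u, u ∉ D → M u = Pi.single u 1 := by
    intro u hu
    rw [hMdef, row_mul]
    funext j
    have : ∀ k, Cmat A c D u k = C0 u k := fun k => congrFun (Cmat_row_notmem hu) k
    calc (∑ k, Cmat A c D u k * C0⁻¹ k j) = ∑ k, C0 u k * C0⁻¹ k j := by
          apply Finset.sum_congr rfl; intro k _; rw [this k]
      _ = (C0 * C0⁻¹) u j := (Matrix.mul_apply).symm
      _ = (1 : Matrix V V F4) u j := by rw [Matrix.mul_nonsing_inv _ hU]
      _ = (Pi.single u (1 : F4) : V → F4) j := by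
            simp [Matrix.one_apply, Pi.single_apply, eq_comm]
  have hrow2 : ∀ u, u ∈ D → M u = Bmat A c u := by
    intro u hu
    rw [hMdef, row_mul, Bmat, row_mul]
    funext j
    apply Finset.sum_congr rfl
    intro k _
    rw [congrFun (Cmat_row_mem hu) k]
  have hMC : M * C0 = Cmat A c D := by
    rw [hMdef, Matrix.mul_assoc, Matrix.nonsing_inv_mul _ hU, Matrix.mul_one]
  have hdetM : M.det = (pSub (Bmat A c) D).det := by
    rw [det_unitRows D M hrow]
    congr 1
    ext i j
    simp only [pSub, Matrix.of_apply]
    rw [congrFun (hrow2 i.1 i.2) j.1]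
  rw [← hMC, Matrix.det_mul, hdetM]

lemma Bmat_herm (hA : InvSymm A) (hc : ∀ v, (c v).1 ≠ (c v).2)
    (h0 : (Cmat A c ∅).det ≠ 0) :
    (Bmat A c).map sg = (Bmat A c)ᵀ := by
  classical
  have hU : IsUnit (Cmat A c ∅).det := isUnit_iff_ne_zero.mpr h0
  have hUs : IsUnit ((Cmat A c ∅).map sg).det := by
    have hd : ((Cmat A c ∅).map sg).det = sg (Cmat A c ∅).det := by
      rw [← RingHom.mapMatrix_apply, ← RingHom.map_det]
    apply isUnit_iff_ne_zero.mpr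
    rw [hd]
    intro h
    exact h0 ((sg_zero_iff _).mp h)
  have hinvmap : ((Cmat A c ∅)⁻¹).map sg = ((Cmat A c ∅).map sg)⁻¹ := by
    symm
    apply Matrix.inv_eq_right_inv
    rw [← Matrix.map_mul, Matrix.mul_nonsing_inv _ hU]
    ext i j
    simp [Matrix.one_apply, apply_ite sg]
  have h1 : (Cmat A c ∅)ᵀ * ((Bmat A c).map sg) = (Cmat A c Finset.univ)ᵀ := by
    rw [Bmat, Matrix.map_mul, hinvmap, ← Matrix.mul_assoc]
    rw [herm_key hA hc]
    rw [Matrix.mul_assoc, Matrix.mul_nonsing_inv _ hUs, Matrix.mul_one]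
  have h2 : (Cmat A c ∅)ᵀ * (Bmat A c)ᵀ = (Cmat A c Finset.univ)ᵀ := by
    rw [Bmat, Matrix.transpose_mul, Matrix.transpose_nonsing_inv, ← Matrix.mul_assoc]
    have hh : (Cmat A c ∅)ᵀ * ((Cmat A c ∅)ᵀ)⁻¹ = 1 := by
      apply Matrix.mul_nonsing_inv
      rw [Matrix.det_transpose]; exact hU
    rw [hh, Matrix.one_mul]
  have hUt : IsUnit ((Cmat A c ∅)ᵀ).det := by rw [Matrix.det_transpose]; exact hU
  calc (Bmat A c).map sg
      = ((Cmat A c ∅)ᵀ)⁻¹ * ((Cmat A c ∅)ᵀ * ((Bmat A c).map sg)) := by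
        rw [← Matrix.mul_assoc, Matrix.nonsing_inv_mul _ hUt, Matrix.one_mul]
    _ = ((Cmat A c ∅)ᵀ)⁻¹ * ((Cmat A c ∅)ᵀ * (Bmat A c)ᵀ) := by rw [h1, h2]
    _ = (Bmat A c)ᵀ := by
        rw [← Matrix.mul_assoc, Matrix.nonsing_inv_mul _ hUt, Matrix.one_mul]

lemma det_pSub_singleton {K : Type} [Field K] (B : Matrix V V K) (u : V) :
    (pSub B {u}).det = B u u := by
  classical
  letI : Unique (({u} : Finset V) : Type) :=
    ⟨⟨⟨u, Finset.mem_singleton_self u⟩⟩,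
      fun i => Subtype.ext (Finset.mem_singleton.mp i.2)⟩
  rw [Matrix.det_unique]
  rfl

lemma det_pSub_pair {K : Type} [Field K] (B : Matrix V V K) {u v : V} (huv : u ≠ v) :
    (pSub B {u, v}).det = B u u * B v v - B u v * B v u := by
  classical
  have hu : u ∈ ({u, v} : Finset V) := by simp
  have hv : v ∈ ({u, v} : Finset V) := by simp
  let e : Fin 2 ≃ (({u, v} : Finset V) : Type) :=
    { toFun := ![⟨u, hu⟩, ⟨v, hv⟩]
      invFun := fun x => if x.1 = u then 0 else 1
      left_inv := by
        intro i
        fin_cases i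
        · simp
        · simp [huv.symm]
      right_inv := by
        intro x
        rcases Finset.mem_insert.mp x.2 with h | h
        · simp [h, Subtype.ext_iff]
        · have hxv : x.1 = v := Finset.mem_singleton.mp h
          by_cases hxu : x.1 = u
          · simp [hxu, Subtype.ext_iff]
          · simp [hxu, hxv, Subtype.ext_iff, huv.symm] }
  rw [← Matrix.det_submatrix_equiv_self e (pSub B {u, v}), Matrix.det_fin_two]
  have e0 : (e 0).1 = u := rfl
  have e1 : (e 1).1 = v := rfl
  simp only [Matrix.submatrix_apply, pSub, Matrix.of_apply, e0, e1]

/-- THE CORE EXCHANGE LEMMA -/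
lemma core_exchange (hA : InvSymm A) (hc : ∀ v, (c v).1 ≠ (c v).2)
    (h0 : ∅ ∈ suppSet A c) {Y : Finset V} (hY : Y ∈ suppSet A c)
    {u : V} (huY : u ∈ Y) :
    ({u} : Finset V) ∈ suppSet A c ∨
      ∃ v ∈ Y, v ≠ u ∧ ({u, v} : Finset V) ∈ suppSet A c := by
  classical
  have h0' : (Cmat A c ∅).det ≠ 0 := mem_suppSet.mp h0
  set B := Bmat A c with hB
  have hmem : ∀ D : Finset V, D ∈ suppSet A c ↔ (pSub B D).det ≠ 0 := by
    intro D
    rw [mem_suppSet, det_Cmat_eq_B h0' D]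
    constructor
    · intro h hc'; exact h (by rw [hc', zero_mul])
    · intro h; exact mul_ne_zero h h0'
  have hherm := Bmat_herm hA hc h0'
  have hsg : ∀ i j, sg (B i j) = B j i := by
    intro i j
    have := congrFun (congrFun hherm i) j
    simpa [Matrix.map_apply, Matrix.transpose_apply] using this
  have hBY : (pSub B Y).det ≠ 0 := (hmem Y).mp hY
  rcases gf2val (hsg u u) with hBuu | hBuu
  · -- B u u = 0 : find an exchange partner
    right
    have hex : ∃ v ∈ Y, B u v ≠ 0 := by
      by_contra hno
      push_neg at hno
      apply hBY
      apply Matrix.det_eq_zero_of_row_eq_zero (⟨u, huY⟩ : (Y : Type))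
      intro j
      exact hno j.1 j.2
    rcases hex with ⟨v, hvY, hBuv⟩
    have hvu : v ≠ u := by
      intro h; rw [h] at hBuv; exact hBuv hBuu
    refine ⟨v, hvY, hvu, ?_⟩
    rw [hmem, det_pSub_pair B (Ne.symm hvu), hBuu, zero_mul]
    have hBvu : B v u ≠ 0 := by
      rw [← hsg u v]
      intro h
      exact hBuv ((sg_zero_iff _).mp h)
    intro h
    have : B u v * B v u = 0 := by linear_combination -h
    rcases mul_eq_zero.mp this with h' | h'
    · exact hBuv h'
    · exact hBvu h'
  · -- B u u = 1
    left
    rw [hmem, det_pSub_singleton, hBuu]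
    exact one_ne_zero

end Core

-- ===== chunk 4 : delta-matroid property and flip invariance =====

lemma rep_exchange {E : Finset (Finset V)} (hrep : RepSys E) :
    ∀ X ∈ E, ∀ Y ∈ E, ∀ u ∈ X ∆ Y,
      X ∆ ({u} : Finset V) ∈ E ∨ ∃ v ∈ X ∆ Y, v ≠ u ∧ X ∆ ({u, v} : Finset V) ∈ E := by
  rcases hrep with ⟨A, c, hA, hc, rfl⟩
  intro X hX Y hY u hu
  have hc' := swapC_distinct hc X
  have hmem : ∀ Z : Finset V, Z ∈ suppSet A (swapC c X) ↔ Z ∆ X ∈ suppSet A c := by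
    intro Z; rw [suppSet_swapC, mem_pivotOp]
  have h0 : ∅ ∈ suppSet A (swapC c X) := by
    rw [hmem]
    have e : (∅ : Finset V) ∆ X = X := by
      rw [← Finset.bot_eq_empty, bot_symmDiff]
    rwa [e]
  have hY' : X ∆ Y ∈ suppSet A (swapC c X) := by
    rw [hmem]
    have e : (X ∆ Y) ∆ X = Y := by
      rw [symmDiff_comm X Y, symmDiff_symmDiff_cancel_right]
    rwa [e]
  rcases core_exchange hA hc' h0 hY' hu with h | ⟨v, hv, hvu, h⟩
  · left
    rw [hmem] at h
    rwa [symmDiff_comm] at h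
  · right
    refine ⟨v, hv, hvu, ?_⟩
    rw [hmem] at h
    rwa [symmDiff_comm] at h

lemma rep_isDeltaMatroid {E : Finset (Finset V)} (hrep : RepSys E) (hne : E.Nonempty) :
    IsDeltaMatroid E := ⟨hne, rep_exchange hrep⟩

lemma repSys_pivotOp {E : Finset (Finset V)} (h : RepSys E) (X : Finset V) :
    RepSys (pivotOp E X) := by
  rcases h with ⟨A, c, hA, hc, rfl⟩
  exact ⟨A, swapC c X, hA, swapC_distinct hc X, (suppSet_swapC c X).symm⟩

lemma repSys_loopC {E : Finset (Finset V)} (h : RepSys E) (u : V) :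
    RepSys (loopC E u) := by
  rcases h with ⟨A, c, hA, hc, rfl⟩
  exact ⟨A, loopSt c u, hA, loopSt_distinct hc u, (suppSet_loopSt hA hc u).symm⟩

lemma applyFlips_invariant (φ : List (V ⊕ V)) :
    ∀ E : Finset (Finset V), RepSys E → E.Nonempty →
      RepSys (applyFlips E φ) ∧ (applyFlips E φ).Nonempty := by
  induction φ with
  | nil => exact fun E h h' => ⟨h, h'⟩
  | cons op φ ih =>
    intro E h h'
    have hstep : applyFlips E (op :: φ)
        = applyFlips (match op with
            | Sum.inl u => pivotOp E {u}
            | Sum.inr u => loopC E u) φ := rfl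
    rw [hstep]
    cases op with
    | inl u => exact ih _ (repSys_pivotOp h {u}) (pivotOp_nonempty h')
    | inr u => exact ih _ (repSys_loopC h u) (loopC_nonempty h')

-- ===== chunk 5 : the base case : colBases is representable =====

section BaseCase

variable {W : Type} [Fintype W] (A0 : Matrix W V (GaloisField 2 2))

/-- column of A0 -/
noncomputable def acol : V → (W → GaloisField 2 2) := fun v => A0ᵀ v

lemma colIndep_iff (Y : Finset V) :
    ColIndep A0 Y ↔ LinearIndependent (GaloisField 2 2) (fun y : Y => acol A0 y.1) :=
  Iff.rfl

open scoped Classical in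
lemma mem_colBases_iff (Z : Finset V) :
    Z ∈ colBases A0 ↔ ColIndep A0 Z ∧ ∀ Z', Z ⊆ Z' → ColIndep A0 Z' → Z = Z' := by
  simp [colBases]

lemma colIndep_insert {Y : Finset V} (hY : ColIndep A0 Y) {w : V}
    (hw : acol A0 w ∉ Submodule.span (GaloisField 2 2)
      (Set.range (fun y : Y => acol A0 y.1))) :
    ColIndep A0 (insert w Y) := by
  classical
  have hwY : w ∉ Y := by
    intro hmem
    exact hw (Submodule.subset_span ⟨⟨w, hmem⟩, rfl⟩)
  rw [colIndep_iff]
  rw [← linearIndependent_equiv (Finset.subtypeInsertEquivOption hwY).symm]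
  have hcomp : (fun y : (insert w Y : Finset V) => acol A0 y.1)
        ∘ (Finset.subtypeInsertEquivOption hwY).symm
      = fun o : Option Y => Option.elim o (acol A0 w) (fun y : Y => acol A0 y.1) := by
    funext o
    cases o with
    | none => simp [Finset.subtypeInsertEquivOption]
    | some y => simp [Finset.subtypeInsertEquivOption]
  rw [hcomp]
  apply linearIndependent_option.mpr
  refine ⟨?_, ?_⟩
  · exact hY
  · exact hw

lemma exists_base : ∃ T, T ∈ colBases A0 := by
  classical
  have hne : (Finset.univ.filter (fun Y : Finset V => ColIndep A0 Y)).Nonempty := by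
    refine ⟨∅, Finset.mem_filter.mpr ⟨Finset.mem_univ _, ?_⟩⟩
    haveI : IsEmpty ((∅ : Finset V) : Type) := Finset.isEmpty_coe_sort.mpr rfl
    exact linearIndependent_empty_type
  obtain ⟨T, hT, hmax⟩ := Finset.exists_max_image _ (fun Y => Y.card) hne
  refine ⟨T, (mem_colBases_iff A0 T).mpr ⟨(Finset.mem_filter.mp hT).2, ?_⟩⟩
  intro Z hTZ hZ
  exact Finset.eq_of_subset_of_card_le hTZ
    (hmax Z (Finset.mem_filter.mpr ⟨Finset.mem_univ _, hZ⟩))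

lemma spans_of_colBases {Z : Finset V} (hZ : Z ∈ colBases A0) (v : V) :
    acol A0 v ∈ Submodule.span (GaloisField 2 2)
      (Set.range (fun z : Z => acol A0 z.1)) := by
  by_contra hv
  rcases (mem_colBases_iff A0 Z).mp hZ with ⟨hind, hmaxZ⟩
  have hins := colIndep_insert A0 hind hv
  have := hmaxZ _ (Finset.subset_insert v Z) hins
  have hvZ : v ∈ Z := Finset.insert_eq_self.mp this.symm
  exact hv (Submodule.subset_span ⟨⟨v, hvZ⟩, rfl⟩)

end BaseCase

section BaseCase2

variable {W : Type} [Fintype W] (A0 : Matrix W V (GaloisField 2 2))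

open scoped Classical in
noncomputable def coords (T : Finset V) (v : V) : V → GaloisField 2 2 :=
  if h : ∃ c : V → GaloisField 2 2, ∑ t ∈ T, c t • acol A0 t = acol A0 v
  then h.choose else 0

lemma coords_spec {T : Finset V} (hT : T ∈ colBases A0) (v : V) :
    ∑ t ∈ T, coords A0 T v t • acol A0 t = acol A0 v := by
  classical
  have hsp := spans_of_colBases A0 hT v
  rw [Submodule.mem_span_range_iff_exists_fun] at hsp
  rcases hsp with ⟨c, hc⟩
  have hex : ∃ c' : V → GaloisField 2 2, ∑ t ∈ T, c' t • acol A0 t = acol A0 v := by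
    refine ⟨fun u => if h : u ∈ T then c ⟨u, h⟩ else 0, ?_⟩
    rw [← Finset.sum_attach T (fun t => _ • acol A0 t)]
    rw [← hc, ← Finset.univ_eq_attach]
    apply Finset.sum_congr rfl
    intro t _
    rw [dif_pos t.2]
  rw [coords, dif_pos hex]
  exact hex.choose_spec

lemma indepT {T : Finset V} (hT : T ∈ colBases A0) (g : V → GaloisField 2 2)
    (hg : ∑ t ∈ T, g t • acol A0 t = 0) : ∀ t ∈ T, g t = 0 := by
  classical
  have hind : ColIndep A0 T := ((mem_colBases_iff A0 T).mp hT).1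
  rw [colIndep_iff, Fintype.linearIndependent_iff] at hind
  intro t ht
  refine hind (fun t => g t.1) ?_ ⟨t, ht⟩
  rw [Finset.univ_eq_attach, Finset.sum_attach T (fun t => g t • acol A0 t)]
  exact hg

lemma uniqT {T : Finset V} (hT : T ∈ colBases A0) (g h : V → GaloisField 2 2)
    (hgh : ∑ t ∈ T, g t • acol A0 t = ∑ t ∈ T, h t • acol A0 t) :
    ∀ t ∈ T, g t = h t := by
  intro t ht
  have h0 : ∑ t ∈ T, (fun u => g u - h u) t • acol A0 t = 0 := by
    simp only [sub_smul]
    rw [Finset.sum_sub_distrib, hgh, sub_self]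
  have := indepT A0 hT _ h0 t ht
  exact sub_eq_zero.mp this

lemma coords_base {T : Finset V} (hT : T ∈ colBases A0) {t t' : V}
    (ht : t ∈ T) (ht' : t' ∈ T) :
    coords A0 T t' t = if t = t' then 1 else 0 := by
  classical
  apply uniqT A0 hT (coords A0 T t') (fun u => if u = t' then 1 else 0) ?_ t ht
  rw [coords_spec A0 hT t']
  symm
  simp only [ite_smul, one_smul, zero_smul]
  rw [Finset.sum_ite_eq' T t' (acol A0)]
  simp [ht']

end BaseCase2

section BaseCase3

variable {W : Type} [Fintype W] (A0 : Matrix W V (GaloisField 2 2))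

noncomputable def Atil (T : Finset V) : Matrix V V (GaloisField 2 2) :=
  Matrix.of fun u v =>
    if u ∈ T then (if v ∈ T then 0 else coords A0 T v u)
    else (if v ∈ T then sg (coords A0 T u v) else 0)

lemma Atil_apply (T : Finset V) (u v : V) :
    Atil A0 T u v = if u ∈ T then (if v ∈ T then 0 else coords A0 T v u)
      else (if v ∈ T then sg (coords A0 T u v) else 0) := rfl

lemma Atil_invSymm (T : Finset V) : InvSymm (Atil A0 T) := by
  intro i j
  rw [Matrix.transpose_apply, CharTwo.neg_eq, ← sg_apply]
  rw [Atil_apply, Atil_apply]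
  by_cases hi : i ∈ T <;> by_cases hj : j ∈ T <;> simp [hi, hj, sg_sg]

def cbase (T : Finset V) : V → Fin 3 × Fin 3 := fun u => if u ∈ T then (1, 0) else (0, 1)

lemma cbase_distinct (T : Finset V) : ∀ u, ((cbase T u).1 ≠ (cbase T u).2) := by
  intro u
  by_cases h : u ∈ T <;> simp [cbase, h] <;> decide

lemma Cmat_mulVec_apply (A : Matrix V V (GaloisField 2 2)) (c : V → Fin 3 × Fin 3)
    (Z : Finset V) (x : V → GaloisField 2 2) (u : V) :
    (Cmat A c Z).mulVec x u
      = (cov (stateAt c Z u)).1 * x u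
        + (cov (stateAt c Z u)).2 * ∑ v, A u v * x v := by
  classical
  rw [Matrix.mulVec, dotProduct]
  have : ∀ v, Cmat A c Z u v * x v
      = (if u = v then (cov (stateAt c Z u)).1 * x v else 0)
        + (cov (stateAt c Z u)).2 * (A u v * x v) := by
    intro v
    rw [Cmat_apply]
    by_cases h : u = v <;> simp [h] <;> ring
  rw [Finset.sum_congr rfl (fun v _ => this v), Finset.sum_add_distrib]
  congr 1
  · rw [Finset.sum_ite_eq Finset.univ u (fun v => (cov (stateAt c Z u)).1 * x v)]
    simp
  · rw [Finset.mul_sum]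

lemma sum_eq_sum_support {f : V → GaloisField 2 2} {s : Finset V}
    (h : ∀ v, v ∉ s → f v = 0) : ∑ v, f v = ∑ v ∈ s, f v :=
  (Finset.sum_subset (Finset.subset_univ s) (fun v _ hv => h v hv)).symm

lemma state_cbase_x {T Z : Finset V} {u : V}
    (h : (u ∈ T ∧ u ∈ Z) ∨ (u ∉ T ∧ u ∉ Z)) :
    cov (stateAt (cbase T) Z u) = (1, 0) := by
  rcases h with ⟨h1, h2⟩ | ⟨h1, h2⟩ <;> simp [stateAt, cbase, h1, h2, cov]

lemma state_cbase_y {T Z : Finset V} {u : V}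
    (h : (u ∈ T ∧ u ∉ Z) ∨ (u ∉ T ∧ u ∈ Z)) :
    cov (stateAt (cbase T) Z u) = (0, 1) := by
  rcases h with ⟨h1, h2⟩ | ⟨h1, h2⟩ <;> simp [stateAt, cbase, h1, h2, cov]

lemma ker_Cmat_iff (T Z : Finset V) (x : V → GaloisField 2 2) :
    (Cmat (Atil A0 T) (cbase T) Z).mulVec x = 0 ↔
      ((∀ u, ((u ∈ T ∧ u ∈ Z) ∨ (u ∉ T ∧ u ∉ Z)) → x u = 0) ∧
       (∀ u, ((u ∈ T ∧ u ∉ Z) ∨ (u ∉ T ∧ u ∈ Z)) → ∑ v, Atil A0 T u v * x v = 0)) := by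
  constructor
  · intro h
    constructor
    · intro u hu
      have := congrFun h u
      rw [Cmat_mulVec_apply, state_cbase_x hu] at this
      simpa using this
    · intro u hu
      have := congrFun h u
      rw [Cmat_mulVec_apply, state_cbase_y hu] at this
      simpa using this
  · rintro ⟨h1, h2⟩
    funext u
    rw [Cmat_mulVec_apply]
    by_cases hT : u ∈ T <;> by_cases hZ : u ∈ Z
    · rw [state_cbase_x (Or.inl ⟨hT, hZ⟩)]
      simp [h1 u (Or.inl ⟨hT, hZ⟩)]
    · rw [state_cbase_y (Or.inl ⟨hT, hZ⟩)]
      simp [h2 u (Or.inl ⟨hT, hZ⟩)]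
    · rw [state_cbase_y (Or.inr ⟨hT, hZ⟩)]
      simp [h2 u (Or.inr ⟨hT, hZ⟩)]
    · rw [state_cbase_x (Or.inr ⟨hT, hZ⟩)]
      simp [h1 u (Or.inr ⟨hT, hZ⟩)]

end BaseCase3

section BaseCase4

variable {W : Type} [Fintype W] (A0 : Matrix W V (GaloisField 2 2))

lemma smul_interchange (s : Finset V) (T : Finset V) (cz : V → GaloisField 2 2)
    (hT : T ∈ colBases A0) :
    ∑ v ∈ s, cz v • acol A0 v
      = ∑ t ∈ T, (∑ v ∈ s, cz v * coords A0 T v t) • acol A0 t := by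
  have step1 : ∀ v, cz v • acol A0 v
      = ∑ t ∈ T, (cz v * coords A0 T v t) • acol A0 t := by
    intro v
    rw [← coords_spec A0 hT v, Finset.smul_sum]
    apply Finset.sum_congr rfl
    intro t _
    rw [smul_smul]
  rw [Finset.sum_congr rfl (fun v _ => step1 v), Finset.sum_comm]
  apply Finset.sum_congr rfl
  intro t _
  rw [Finset.sum_smul]

lemma dirA {T Z : Finset V} (hT : T ∈ colBases A0) (hZ : Z ∈ colBases A0)
    (x : V → GaloisField 2 2)
    (hx : (Cmat (Atil A0 T) (cbase T) Z).mulVec x = 0) : x = 0 := by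
  classical
  rw [ker_Cmat_iff] at hx
  obtain ⟨C1, C2⟩ := hx
  have C2a : ∀ t ∈ T, t ∉ Z → ∑ v ∈ Z \ T, coords A0 T v t * x v = 0 := by
    intro t ht htZ
    have hsupp : ∀ v, v ∉ Z \ T → Atil A0 T t v * x v = 0 := by
      intro v hv
      rw [Finset.mem_sdiff] at hv
      push_neg at hv
      by_cases hvT : v ∈ T
      · rw [Atil_apply]; simp [ht, hvT]
      · rw [C1 v (Or.inr ⟨hvT, fun hvZ => hvT (hv hvZ)⟩), mul_zero]
    have h0 := C2 t (Or.inl ⟨ht, htZ⟩)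
    rw [sum_eq_sum_support hsupp] at h0
    rw [← h0]
    apply Finset.sum_congr rfl
    intro v hv
    rw [Finset.mem_sdiff] at hv
    rw [Atil_apply]
    simp [ht, hv.2]
  have C2b : ∀ w, w ∉ T → w ∈ Z → ∑ t ∈ T \ Z, sg (coords A0 T w t) * x t = 0 := by
    intro w hwT hwZ
    have hsupp : ∀ v, v ∉ T \ Z → Atil A0 T w v * x v = 0 := by
      intro v hv
      rw [Finset.mem_sdiff] at hv
      push_neg at hv
      by_cases hvT : v ∈ T
      · rw [C1 v (Or.inl ⟨hvT, hv hvT⟩), mul_zero]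
      · rw [Atil_apply]; simp [hwT, hvT]
    have h0 := C2 w (Or.inr ⟨hwT, hwZ⟩)
    rw [sum_eq_sum_support hsupp] at h0
    rw [← h0]
    apply Finset.sum_congr rfl
    intro v hv
    rw [Finset.mem_sdiff] at hv
    rw [Atil_apply]
    simp [hwT, hv.1]
  -- Step 1 : x vanishes on Z \ T
  have hZind := ((mem_colBases_iff A0 Z).mp hZ).1
  set g : V → GaloisField 2 2 :=
    fun z => if z ∈ T then ∑ v ∈ Z \ T, coords A0 T v z * x v else x z with hg
  have hgsum : ∑ z ∈ Z, g z • acol A0 z = 0 := by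
    rw [← Finset.sum_filter_add_sum_filter_not Z (fun z => z ∈ T)
      (fun z => g z • acol A0 z)]
    have e2 : Z.filter (fun z => ¬ z ∈ T) = Z \ T := by
      ext v; simp [Finset.mem_sdiff]
    have hgin : ∀ z ∈ Z.filter (fun z => z ∈ T),
        g z • acol A0 z = (∑ v ∈ Z \ T, coords A0 T v z * x v) • acol A0 z := by
      intro z hz
      simp only [hg]
      rw [if_pos (Finset.mem_filter.mp hz).2]
    have hgout : ∀ z ∈ Z \ T, g z • acol A0 z = x z • acol A0 z := by
      intro z hz
      simp only [hg]
      rw [if_neg (Finset.mem_sdiff.mp hz).2]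
    rw [e2, Finset.sum_congr rfl hgin, Finset.sum_congr rfl hgout]
    rw [smul_interchange A0 (Z \ T) T x hT]
    rw [← Finset.sum_filter_add_sum_filter_not T (fun t => t ∈ Z)
      (fun t => (∑ v ∈ Z \ T, x v * coords A0 T v t) • acol A0 t)]
    have hzero : ∀ t ∈ T.filter (fun t => ¬ t ∈ Z),
        (∑ v ∈ Z \ T, x v * coords A0 T v t) • acol A0 t = 0 := by
      intro t ht
      rcases Finset.mem_filter.mp ht with ⟨ht1, ht2⟩
      have hc := C2a t ht1 ht2
      have e : ∑ v ∈ Z \ T, x v * coords A0 T v t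
          = ∑ v ∈ Z \ T, coords A0 T v t * x v := by
        apply Finset.sum_congr rfl; intro v _; ring
      rw [e, hc, zero_smul]
    rw [Finset.sum_eq_zero hzero, add_zero]
    have eswap : T.filter (fun t => t ∈ Z) = Z.filter (fun z => z ∈ T) := by
      ext v; simp [and_comm]
    rw [eswap]
    have ecomm : ∀ z ∈ Z.filter (fun z => z ∈ T),
        (∑ v ∈ Z \ T, x v * coords A0 T v z) • acol A0 z
          = (∑ v ∈ Z \ T, coords A0 T v z * x v) • acol A0 z := by
      intro z _
      congr 1
      apply Finset.sum_congr rfl; intro v _; ring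
    rw [Finset.sum_congr rfl ecomm, ← Finset.sum_add_distrib]
    apply Finset.sum_eq_zero
    intro z _
    rw [← add_smul, CharTwo.add_self_eq_zero, zero_smul]
  have hzeta : ∀ z : (Z : Finset V), g z.1 = 0 := by
    rw [colIndep_iff, Fintype.linearIndependent_iff] at hZind
    apply hZind (fun z => g z.1)
    rw [Finset.univ_eq_attach, Finset.sum_attach Z (fun z => g z • acol A0 z)]
    exact hgsum
  have hxZT : ∀ v, v ∈ Z → v ∉ T → x v = 0 := by
    intro v hvZ hvT
    have hz0 := hzeta ⟨v, hvZ⟩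
    simp only [hg] at hz0
    rwa [if_neg hvT] at hz0
  -- Step 2 : x vanishes on T \ Z
  have hxTZ : ∀ t₀, t₀ ∈ T → t₀ ∉ Z → x t₀ = 0 := by
    intro t₀ ht₀T ht₀Z
    have hgv : ∀ v ∈ Z, ∑ t ∈ T \ Z, coords A0 T v t * sg (x t) = 0 := by
      intro v hvZ
      by_cases hvT : v ∈ T
      · apply Finset.sum_eq_zero
        intro t ht
        rcases Finset.mem_sdiff.mp ht with ⟨htT, htZ⟩
        rw [coords_base A0 hT htT hvT]
        have hne : t ≠ v := fun h => htZ (h ▸ hvZ)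
        simp [hne]
      · have h0 := C2b v hvT hvZ
        have h1 := congrArg sg h0
        rw [map_sum, map_zero] at h1
        rw [← h1]
        apply Finset.sum_congr rfl
        intro t _
        rw [_root_.map_mul, sg_sg]
    have hsp := spans_of_colBases A0 hZ t₀
    rw [Submodule.mem_span_range_iff_exists_fun] at hsp
    rcases hsp with ⟨cz, hcz⟩
    set ξ : V → GaloisField 2 2 := fun v => if h : v ∈ Z then cz ⟨v, h⟩ else 0 with hξ
    have hξsum : ∑ z ∈ Z, ξ z • acol A0 z = acol A0 t₀ := by
      rw [← Finset.sum_attach Z (fun z => ξ z • acol A0 z)]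
      rw [← hcz, ← Finset.univ_eq_attach]
      apply Finset.sum_congr rfl
      intro z _
      simp only [hξ]
      rw [dif_pos z.2]
    have hstar : ∀ t ∈ T, ∑ z ∈ Z, ξ z * coords A0 T z t
        = if t = t₀ then 1 else 0 := by
      intro t ht
      apply uniqT A0 hT (fun t => ∑ z ∈ Z, ξ z * coords A0 T z t)
        (fun t => if t = t₀ then 1 else 0) ?_ t ht
      rw [← smul_interchange A0 Z T ξ hT, hξsum]
      symm
      simp only [ite_smul, one_smul, zero_smul]
      rw [Finset.sum_ite_eq' T t₀ (acol A0)]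
      simp [ht₀T]
    have key : sg (x t₀) = 0 := by
      have e1 : sg (x t₀)
          = ∑ t ∈ T \ Z, (∑ z ∈ Z, ξ z * coords A0 T z t) * sg (x t) := by
        have h2 : ∑ t ∈ T \ Z, (∑ z ∈ Z, ξ z * coords A0 T z t) * sg (x t)
            = ∑ t ∈ T \ Z, (if t = t₀ then 1 else 0) * sg (x t) := by
          apply Finset.sum_congr rfl
          intro t ht
          rw [hstar t (Finset.mem_sdiff.mp ht).1]
        rw [h2]
        simp only [ite_mul, one_mul, zero_mul]
        rw [Finset.sum_ite_eq' (T \ Z) t₀ (fun t => sg (x t))]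
        simp [Finset.mem_sdiff, ht₀T, ht₀Z]
      have e2 : ∑ t ∈ T \ Z, (∑ z ∈ Z, ξ z * coords A0 T z t) * sg (x t)
          = ∑ z ∈ Z, ξ z * (∑ t ∈ T \ Z, coords A0 T z t * sg (x t)) := by
        calc ∑ t ∈ T \ Z, (∑ z ∈ Z, ξ z * coords A0 T z t) * sg (x t)
            = ∑ t ∈ T \ Z, ∑ z ∈ Z, ξ z * coords A0 T z t * sg (x t) := by
              apply Finset.sum_congr rfl
              intro t _
              rw [Finset.sum_mul]
          _ = ∑ z ∈ Z, ∑ t ∈ T \ Z, ξ z * coords A0 T z t * sg (x t) :=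
              Finset.sum_comm
          _ = ∑ z ∈ Z, ξ z * (∑ t ∈ T \ Z, coords A0 T z t * sg (x t)) := by
              apply Finset.sum_congr rfl
              intro z _
              rw [Finset.mul_sum]
              apply Finset.sum_congr rfl
              intro t _
              ring
      rw [e1, e2]
      apply Finset.sum_eq_zero
      intro z hz
      rw [hgv z hz, mul_zero]
    have h3 := congrArg sg key
    rwa [sg_sg, map_zero] at h3
  funext u
  by_cases hT' : u ∈ T <;> by_cases hZ' : u ∈ Z
  · exact C1 u (Or.inl ⟨hT', hZ'⟩)
  · exact hxTZ u hT' hZ'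
  · exact hxZT u hZ' hT'
  · exact C1 u (Or.inr ⟨hT', hZ'⟩)

end BaseCase4

section BaseCase5

variable {W : Type} [Fintype W] (A0 : Matrix W V (GaloisField 2 2))

lemma dirB {T Z : Finset V} (hT : T ∈ colBases A0)
    (hker : ∀ x, (Cmat (Atil A0 T) (cbase T) Z).mulVec x = 0 → x = 0) :
    Z ∈ colBases A0 := by
  classical
  -- B1 : independence
  have hindep : ColIndep A0 Z := by
    rw [colIndep_iff, Fintype.linearIndependent_iff]
    intro ζ hζ
    set ζ' : V → GaloisField 2 2 := fun v => if h : v ∈ Z then ζ ⟨v, h⟩ else 0 with hζ'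
    have hdep : ∑ z ∈ Z, ζ' z • acol A0 z = 0 := by
      rw [← Finset.sum_attach Z (fun z => ζ' z • acol A0 z)]
      rw [← hζ, ← Finset.univ_eq_attach]
      apply Finset.sum_congr rfl
      intro z _
      simp only [hζ']
      rw [dif_pos z.2]
    have hcoord : ∀ t ∈ T, ∑ z ∈ Z, ζ' z * coords A0 T z t = 0 := by
      have h0 : ∑ t ∈ T, (∑ z ∈ Z, ζ' z * coords A0 T z t) • acol A0 t = 0 := by
        rw [← smul_interchange A0 Z T ζ' hT, hdep]
      exact indepT A0 hT _ h0
    set x : V → GaloisField 2 2 := fun v => if v ∈ Z ∧ v ∉ T then ζ' v else 0 with hx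
    have hxker : (Cmat (Atil A0 T) (cbase T) Z).mulVec x = 0 := by
      rw [ker_Cmat_iff]
      constructor
      · intro u hu
        simp only [hx]
        rcases hu with ⟨h1, h2⟩ | ⟨h1, h2⟩
        · rw [if_neg (fun hc => hc.2 h1)]
        · rw [if_neg (fun hc => h2 hc.1)]
      · intro u hu
        rcases hu with ⟨huT, huZ⟩ | ⟨huT, huZ⟩
        · -- row u ∈ T \ Z
          have hsupp : ∀ v, v ∉ Z \ T → Atil A0 T u v * x v = 0 := by
            intro v hv
            rw [Finset.mem_sdiff] at hv
            simp only [hx]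
            rw [if_neg (fun hc => hv ⟨hc.1, hc.2⟩), mul_zero]
          rw [sum_eq_sum_support hsupp]
          have hred := hcoord u huT
          rw [← Finset.sum_filter_add_sum_filter_not Z (fun z => z ∈ T)
            (fun z => ζ' z * coords A0 T z u)] at hred
          have hfz : ∀ z ∈ Z.filter (fun z => z ∈ T),
              ζ' z * coords A0 T z u = 0 := by
            intro z hz
            rcases Finset.mem_filter.mp hz with ⟨hz1, hz2⟩
            rw [coords_base A0 hT huT hz2]
            have hne : u ≠ z := fun h => huZ (h ▸ hz1)
            simp [hne]
          rw [Finset.sum_eq_zero hfz, zero_add] at hred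
          have e2 : Z.filter (fun z => ¬ z ∈ T) = Z \ T := by
            ext v; simp [Finset.mem_sdiff]
          rw [e2] at hred
          rw [← hred]
          apply Finset.sum_congr rfl
          intro v hv
          rcases Finset.mem_sdiff.mp hv with ⟨hv1, hv2⟩
          rw [Atil_apply]
          simp only [hx]
          rw [if_pos huT, if_neg hv2, if_pos (show v ∈ Z ∧ v ∉ T from ⟨hv1, hv2⟩)]
          ring
        · -- row u ∈ Z \ T
          apply Finset.sum_eq_zero
          intro v _
          by_cases hvT : v ∈ T
          · simp only [hx]
            rw [if_neg (fun hc => hc.2 hvT), mul_zero]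
          · rw [Atil_apply]
            simp [huT, hvT]
    have hx0 := hker x hxker
    have hζ'ZT : ∀ v, v ∈ Z → v ∉ T → ζ' v = 0 := by
      intro v h1 h2
      have := congrFun hx0 v
      simp only [hx] at this
      rwa [if_pos ⟨h1, h2⟩] at this
    -- now the dependency is supported on Z ∩ T
    have hg0 : ∀ t ∈ T, (fun v => if v ∈ Z then ζ' v else 0) t = 0 := by
      apply indepT A0 hT
      have e1 : ∑ t ∈ T, (if t ∈ Z then ζ' t else 0) • acol A0 t
          = ∑ t ∈ T.filter (fun t => t ∈ Z), ζ' t • acol A0 t := by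
        rw [← Finset.sum_filter_add_sum_filter_not T (fun t => t ∈ Z)]
        have ha : ∀ t ∈ T.filter (fun t => t ∈ Z),
            (if t ∈ Z then ζ' t else 0) • acol A0 t = ζ' t • acol A0 t := by
          intro t ht
          rw [if_pos (Finset.mem_filter.mp ht).2]
        have hb : ∀ t ∈ T.filter (fun t => ¬ t ∈ Z),
            (if t ∈ Z then ζ' t else 0) • acol A0 t = 0 := by
          intro t ht
          rw [if_neg (Finset.mem_filter.mp ht).2, zero_smul]
        rw [Finset.sum_congr rfl ha, Finset.sum_eq_zero hb, add_zero]
      rw [e1]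
      have e3 : ∑ z ∈ Z, ζ' z • acol A0 z
          = ∑ z ∈ Z.filter (fun z => z ∈ T), ζ' z • acol A0 z := by
        rw [← Finset.sum_filter_add_sum_filter_not Z (fun z => z ∈ T)]
        have hb : ∀ z ∈ Z.filter (fun z => ¬ z ∈ T),
            ζ' z • acol A0 z = 0 := by
          intro z hz
          rcases Finset.mem_filter.mp hz with ⟨hz1, hz2⟩
          rw [hζ'ZT z hz1 hz2, zero_smul]
        rw [Finset.sum_eq_zero hb, add_zero]
      have eswap : T.filter (fun t => t ∈ Z) = Z.filter (fun z => z ∈ T) := by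
        ext v; simp [and_comm]
      rw [eswap, ← e3, hdep]
    intro z
    have h1 : ζ' z.1 = 0 := by
      by_cases hzT : z.1 ∈ T
      · have h5 := hg0 z.1 hzT
        simp only [if_pos z.2] at h5
        exact h5
      · exact hζ'ZT z.1 z.2 hzT
    simp only [hζ'] at h1
    rwa [dif_pos z.2] at h1
  -- B2 : spanning, via surjectivity
  have hspanZ : ∀ v₀, acol A0 v₀ ∈ Submodule.span (GaloisField 2 2)
      (Set.range (fun z : Z => acol A0 z.1)) := by
    -- injectivity of the two exchange matrices
    set K : Matrix ((T \ Z : Finset V) : Type) ((Z \ T : Finset V) : Type)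
        (GaloisField 2 2) := Matrix.of fun t v => coords A0 T v.1 t.1 with hK
    set L : Matrix ((Z \ T : Finset V) : Type) ((T \ Z : Finset V) : Type)
        (GaloisField 2 2) := Matrix.of fun v t => sg (coords A0 T v.1 t.1) with hL
    have hKinj : Function.Injective K.mulVecLin := by
      rw [← LinearMap.ker_eq_bot, LinearMap.ker_eq_bot']
      intro ξ hξ
      rw [Matrix.mulVecLin_apply] at hξ
      set x : V → GaloisField 2 2 :=
        fun v => if h : v ∈ Z \ T then ξ ⟨v, h⟩ else 0 with hx
      have hxker : (Cmat (Atil A0 T) (cbase T) Z).mulVec x = 0 := by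
        rw [ker_Cmat_iff]
        constructor
        · intro u hu
          simp only [hx]
          rcases hu with ⟨h1, h2⟩ | ⟨h1, h2⟩
          · rw [dif_neg (fun hc => (Finset.mem_sdiff.mp hc).2 h1)]
          · rw [dif_neg (fun hc => h2 (Finset.mem_sdiff.mp hc).1)]
        · intro u hu
          rcases hu with ⟨huT, huZ⟩ | ⟨huT, huZ⟩
          · have hsupp : ∀ v, v ∉ Z \ T → Atil A0 T u v * x v = 0 := by
              intro v hv
              simp only [hx]
              rw [dif_neg hv, mul_zero]
            rw [sum_eq_sum_support hsupp]
            have hKu := congrFun hξ ⟨u, Finset.mem_sdiff.mpr ⟨huT, huZ⟩⟩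
            rw [Matrix.mulVec, dotProduct, Pi.zero_apply,
              Finset.univ_eq_attach] at hKu
            rw [← Finset.sum_attach (Z \ T) (fun v => Atil A0 T u v * x v), ← hKu]
            apply Finset.sum_congr rfl
            intro v _
            rcases Finset.mem_sdiff.mp v.2 with ⟨hv1, hv2⟩
            rw [Atil_apply]
            simp only [hx, hK]
            rw [if_pos huT, if_neg hv2, dif_pos v.2, Matrix.of_apply]
          · apply Finset.sum_eq_zero
            intro v _
            by_cases hvT : v ∈ T
            · simp only [hx]
              rw [dif_neg (fun hc => (Finset.mem_sdiff.mp hc).2 hvT), mul_zero]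
            · rw [Atil_apply]
              simp [huT, hvT]
      have hx0 := hker x hxker
      funext v
      have := congrFun hx0 v.1
      simp only [hx] at this
      rwa [dif_pos v.2] at this
    have hLinj : Function.Injective L.mulVecLin := by
      rw [← LinearMap.ker_eq_bot, LinearMap.ker_eq_bot']
      intro η hη
      rw [Matrix.mulVecLin_apply] at hη
      set x : V → GaloisField 2 2 :=
        fun v => if h : v ∈ T \ Z then η ⟨v, h⟩ else 0 with hx
      have hxker : (Cmat (Atil A0 T) (cbase T) Z).mulVec x = 0 := by
        rw [ker_Cmat_iff]
        constructor
        · intro u hu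
          simp only [hx]
          rcases hu with ⟨h1, h2⟩ | ⟨h1, h2⟩
          · rw [dif_neg (fun hc => (Finset.mem_sdiff.mp hc).2 h2)]
          · rw [dif_neg (fun hc => h1 (Finset.mem_sdiff.mp hc).1)]
        · intro u hu
          rcases hu with ⟨huT, huZ⟩ | ⟨huT, huZ⟩
          · apply Finset.sum_eq_zero
            intro v _
            by_cases hvT : v ∈ T
            · by_cases hvZ : v ∈ Z
              · simp only [hx]
                rw [dif_neg (fun hc => (Finset.mem_sdiff.mp hc).2 hvZ), mul_zero]
              · rw [Atil_apply]
                simp [huT, hvT]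
            · simp only [hx]
              rw [dif_neg (fun hc => hvT (Finset.mem_sdiff.mp hc).1), mul_zero]
          · have hsupp : ∀ v, v ∉ T \ Z → Atil A0 T u v * x v = 0 := by
              intro v hv
              simp only [hx]
              rw [dif_neg hv, mul_zero]
            rw [sum_eq_sum_support hsupp]
            have hLu := congrFun hη ⟨u, Finset.mem_sdiff.mpr ⟨huZ, huT⟩⟩
            rw [Matrix.mulVec, dotProduct, Pi.zero_apply,
              Finset.univ_eq_attach] at hLu
            rw [← Finset.sum_attach (T \ Z) (fun v => Atil A0 T u v * x v), ← hLu]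
            apply Finset.sum_congr rfl
            intro v _
            rcases Finset.mem_sdiff.mp v.2 with ⟨hv1, hv2⟩
            rw [Atil_apply]
            simp only [hx, hL]
            rw [if_neg huT, if_pos hv1, dif_pos v.2, Matrix.of_apply]
      have hx0 := hker x hxker
      funext v
      have := congrFun hx0 v.1
      simp only [hx] at this
      rwa [dif_pos v.2] at this
    have hcard : Fintype.card ((T \ Z : Finset V) : Type)
        = Fintype.card ((Z \ T : Finset V) : Type) := by
      have h1 := LinearMap.finrank_le_finrank_of_injective hKinj
      have h2 := LinearMap.finrank_le_finrank_of_injective hLinj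
      rw [Module.finrank_pi, Module.finrank_pi] at h1 h2
      omega
    have hKsurj : Function.Surjective K.mulVecLin := by
      set e := Fintype.equivOfCardEq hcard
      set φ := LinearEquiv.funCongrLeft (GaloisField 2 2) (GaloisField 2 2) e
      have hcomp : Function.Injective (K.mulVecLin ∘ₗ (φ.symm.toLinearMap)) :=
        hKinj.comp φ.symm.injective
      have hsurj := (LinearMap.injective_iff_surjective).mp hcomp
      intro b
      rcases hsurj b with ⟨y, hy⟩
      exact ⟨φ.symm y, hy⟩
    -- every column of T \ Z lies in the span of the Z columns
    have htspan : ∀ t₀ ∈ T, acol A0 t₀ ∈ Submodule.span (GaloisField 2 2)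
        (Set.range (fun z : Z => acol A0 z.1)) := by
      intro t₀ ht₀
      by_cases ht₀Z : t₀ ∈ Z
      · exact Submodule.subset_span ⟨⟨t₀, ht₀Z⟩, rfl⟩
      · have ht₀TZ : t₀ ∈ T \ Z := Finset.mem_sdiff.mpr ⟨ht₀, ht₀Z⟩
        rcases hKsurj (Pi.single ⟨t₀, ht₀TZ⟩ 1) with ⟨ξ, hξ⟩
        rw [Matrix.mulVecLin_apply] at hξ
        set ξ' : V → GaloisField 2 2 :=
          fun v => if h : v ∈ Z \ T then ξ ⟨v, h⟩ else 0 with hξ'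
        have hw : ∑ v ∈ Z \ T, ξ' v • acol A0 v
            = ∑ t ∈ T, (∑ v ∈ Z \ T, ξ' v * coords A0 T v t) • acol A0 t :=
          smul_interchange A0 (Z \ T) T ξ' hT
        have hcoeff : ∀ t (ht : t ∈ T \ Z),
            ∑ v ∈ Z \ T, ξ' v * coords A0 T v t
              = if t = t₀ then 1 else 0 := by
          intro t ht
          have hKt := congrFun hξ ⟨t, ht⟩
          rw [Matrix.mulVec, dotProduct, Finset.univ_eq_attach] at hKt
          rw [← Finset.sum_attach (Z \ T) (fun v => ξ' v * coords A0 T v t)]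
          have he : ∑ v ∈ (Z \ T).attach, ξ' v.1 * coords A0 T v.1 t
              = ∑ v ∈ (Z \ T).attach, K ⟨t, ht⟩ v * ξ v := by
            apply Finset.sum_congr rfl
            intro v _
            simp only [hξ', hK]
            rw [dif_pos v.2, Matrix.of_apply]
            ring
          rw [he, hKt, Pi.single_apply]
          simp [Subtype.ext_iff]
        have hsplit : ∑ t ∈ T, (∑ v ∈ Z \ T, ξ' v * coords A0 T v t) • acol A0 t
            = (∑ t ∈ T.filter (fun t => t ∈ Z),
                (∑ v ∈ Z \ T, ξ' v * coords A0 T v t) • acol A0 t)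
              + acol A0 t₀ := by
          rw [← Finset.sum_filter_add_sum_filter_not T (fun t => t ∈ Z)
            (fun t => (∑ v ∈ Z \ T, ξ' v * coords A0 T v t) • acol A0 t)]
          congr 1
          have hc : ∀ t ∈ T.filter (fun t => ¬ t ∈ Z),
              (∑ v ∈ Z \ T, ξ' v * coords A0 T v t) • acol A0 t
                = (if t = t₀ then (1 : GaloisField 2 2) else 0) • acol A0 t := by
            intro t ht
            rcases Finset.mem_filter.mp ht with ⟨h1, h2⟩
            rw [hcoeff t (Finset.mem_sdiff.mpr ⟨h1, h2⟩)]
          rw [Finset.sum_congr rfl hc]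
          simp only [ite_smul, one_smul, zero_smul]
          rw [Finset.sum_ite_eq' (T.filter (fun t => ¬ t ∈ Z)) t₀ (acol A0)]
          simp [ht₀, ht₀Z]
        have hmem1 : ∑ v ∈ Z \ T, ξ' v • acol A0 v ∈ Submodule.span (GaloisField 2 2)
            (Set.range (fun z : Z => acol A0 z.1)) := by
          apply Submodule.sum_smul_mem
          intro v hv
          exact Submodule.subset_span ⟨⟨v, (Finset.mem_sdiff.mp hv).1⟩, rfl⟩
        have hmem2 : ∑ t ∈ T.filter (fun t => t ∈ Z),
            (∑ v ∈ Z \ T, ξ' v * coords A0 T v t) • acol A0 t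
              ∈ Submodule.span (GaloisField 2 2)
                (Set.range (fun z : Z => acol A0 z.1)) := by
          apply Submodule.sum_smul_mem
          intro t ht
          exact Submodule.subset_span ⟨⟨t, (Finset.mem_filter.mp ht).2⟩, rfl⟩
        have : acol A0 t₀ = (∑ v ∈ Z \ T, ξ' v • acol A0 v)
            - ∑ t ∈ T.filter (fun t => t ∈ Z),
                (∑ v ∈ Z \ T, ξ' v * coords A0 T v t) • acol A0 t := by
          rw [hw, hsplit]
          abel
        rw [this]
        exact Submodule.sub_mem _ hmem1 hmem2
    intro v₀
    rw [← coords_spec A0 hT v₀]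
    apply Submodule.sum_smul_mem
    intro t ht
    exact htspan t ht
  -- assemble
  rw [mem_colBases_iff]
  refine ⟨hindep, ?_⟩
  intro Z' hZZ' hind'
  apply Finset.Subset.antisymm hZZ'
  intro v' hv'
  by_contra hv'Z
  have hspan := hspanZ v'
  have hsub : Submodule.span (GaloisField 2 2)
      (Set.range (fun z : Z => acol A0 z.1))
      ≤ Submodule.span (GaloisField 2 2)
        ((fun z : Z' => acol A0 z.1) '' {z : Z' | z.1 ∈ Z}) := by
    apply Submodule.span_le.mpr
    rintro _ ⟨z, rfl⟩
    exact Submodule.subset_span ⟨⟨z.1, hZZ' z.2⟩, z.2, rfl⟩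
  have hni := (hind' : LinearIndependent (GaloisField 2 2)
    (fun z : Z' => acol A0 z.1)).notMem_span_image
    (s := {z : Z' | z.1 ∈ Z}) (x := ⟨v', hv'⟩) hv'Z
  exact hni (hsub hspan)

end BaseCase5

section Final

variable {W : Type} [Fintype W] (A0 : Matrix W V (GaloisField 2 2))

open scoped Classical in
lemma colBases_eq {T : Finset V} (hT : T ∈ colBases A0) :
    colBases A0 = suppSet (Atil A0 T) (cbase T) := by
  ext Z
  rw [mem_suppSet]
  constructor
  · intro hZ
    intro hdet0
    rw [← Matrix.exists_mulVec_eq_zero_iff] at hdet0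
    rcases hdet0 with ⟨x, hx0, hx⟩
    exact hx0 (dirA A0 hT hZ x hx)
  · intro hdet
    apply dirB A0 hT
    intro x hx
    by_contra hx0
    exact hdet (Matrix.exists_mulVec_eq_zero_iff.mp ⟨x, hx0, hx⟩)

lemma colBases_repSys : RepSys (colBases A0) := by
  obtain ⟨T, hT⟩ := exists_base A0
  exact ⟨Atil A0 T, cbase T, Atil_invSymm A0 T, cbase_distinct T, colBases_eq A0 hT⟩

lemma colBases_nonempty : (colBases A0).Nonempty := by
  obtain ⟨T, hT⟩ := exists_base A0
  exact ⟨T, hT⟩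

end Final

/-- every quaternary matroid (the set system of bases of the
column matroid of a matrix over GF(4)) is vertex-flip-safe: applying any
sequence of pivots and loop complementations yields a delta-matroid. -/
theorem quaternary_matroid_vfSafe {W : Type} [Fintype W]
    (A : Matrix W V (GaloisField 2 2)) (φ : List (V ⊕ V)) :
    IsDeltaMatroid (applyFlips (colBases A) φ) := by
  obtain ⟨hrep, hne⟩ :=
    applyFlips_invariant φ (colBases A) (colBases_repSys A) (colBases_nonempty A)
  exact rep_isDeltaMatroid hrep hne
end

section
/- Let M be a matroid with standard representation B = (I | S) over a field F (rows indexed by a basis X, columns by the ground set V), and let A be the V×V matrix with blocks A[X,X] = 0, A[X,V\X] = S, A[V\X,X] = −Sᵀ, A[V\X,V\X] = 0. Then M_A = M * X, i.e., for every Y ⊆ V, the principal submatrix A[Y] is nonsingular if and only if Y △ X is a basis of M. -/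
open Matrix
open scoped symmDiff

variable {V : Type} [Fintype V] [DecidableEq V]

open Function


/-- equiv between a disjoint union of finsets and their "union" -/
def finSumEquiv (P Q R : Finset V) (h : ∀ a, a ∈ R ↔ a ∈ P ∨ a ∈ Q)
    (hd : ∀ a, a ∈ P → a ∉ Q) : (P ⊕ Q) ≃ R where
  toFun := Sum.elim (fun i => ⟨i.1, (h _).2 (Or.inl i.2)⟩)
    (fun j => ⟨j.1, (h _).2 (Or.inr j.2)⟩)
  invFun x := if hx : x.1 ∈ P then Sum.inl ⟨x.1, hx⟩
    else Sum.inr ⟨x.1, ((h _).1 x.2).resolve_left hx⟩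
  left_inv := by
    rintro (i | j)
    · simp
    · simp only [Sum.elim_inr]
      exact dif_neg (fun hp => hd j.1 hp j.2)
  right_inv := by
    rintro ⟨x, hx⟩
    by_cases hp : x ∈ P
    · simp [hp]
    · simp [hp]

theorem mulVec_injective_submatrix {F : Type} [Field F] {P Q P' Q' : Type}
    [Fintype Q] [Fintype Q'] (M : Matrix P Q F) (e : P' ≃ P) (f : Q' ≃ Q) :
    Injective (M.submatrix e f).mulVec ↔ Injective M.mulVec := by
  constructor
  · intro h a b hab
    have key : (M.submatrix e f).mulVec (a ∘ f) = (M.submatrix e f).mulVec (b ∘ f) := by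
      rw [Matrix.submatrix_mulVec_equiv, Matrix.submatrix_mulVec_equiv]
      have ha : (a ∘ f) ∘ f.symm = a := by funext x; simp
      have hb : (b ∘ f) ∘ f.symm = b := by funext x; simp
      rw [ha, hb, hab]
    have := h key
    funext q
    have := congrFun this (f.symm q)
    simpa using this
  · intro h a b hab
    rw [Matrix.submatrix_mulVec_equiv, Matrix.submatrix_mulVec_equiv] at hab
    have h2 : M.mulVec (a ∘ f.symm) = M.mulVec (b ∘ f.symm) := by
      funext p
      have := congrFun hab (e.symm p)
      simpa using this
    have := h h2
    funext q
    have := congrFun this (f q)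
    simpa using this

theorem card_le_of_mulVec_injective {F : Type} [Field F] {P Q : Type}
    [Fintype P] [Fintype Q] (M : Matrix P Q F) (h : Injective M.mulVec) :
    Fintype.card Q ≤ Fintype.card P := by
  have hli := Matrix.mulVec_injective_iff.mp h
  simpa [Module.finrank_pi] using hli.fintype_card_le_finrank

theorem transpose_injective_of_card_eq {F : Type} [Field F] {P Q : Type}
    [Fintype P] [Fintype Q] [DecidableEq P] [DecidableEq Q] (M : Matrix P Q F)
    (h : Injective M.mulVec) (hc : Fintype.card P = Fintype.card Q) :
    Injective Mᵀ.mulVec := by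
  obtain e : Q ≃ P := Fintype.equivOfCardEq hc.symm
  have h1 : Injective (M.submatrix e (Equiv.refl Q)).mulVec :=
    (mulVec_injective_submatrix M e (Equiv.refl Q)).mpr h
  have hu : IsUnit (M.submatrix (⇑e) (⇑(Equiv.refl Q))) :=
    Matrix.mulVec_injective_iff_isUnit.mp h1
  have hut : IsUnit (M.submatrix (⇑e) (⇑(Equiv.refl Q)))ᵀ := (Matrix.isUnit_transpose _).mpr hu
  have h2 : Injective (M.submatrix (⇑e) (⇑(Equiv.refl Q)))ᵀ.mulVec :=
    Matrix.mulVec_injective_iff_isUnit.mpr hut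
  rw [Matrix.transpose_submatrix] at h2
  exact (mulVec_injective_submatrix Mᵀ (Equiv.refl Q) e).mp h2

theorem skewBlock_injective_iff {F : Type} [Field F] {P Q : Type}
    [Fintype P] [Fintype Q] (M : Matrix P Q F) :
    Injective (Matrix.fromBlocks (0 : Matrix P P F) M (-Mᵀ) (0 : Matrix Q Q F)).mulVec ↔
      Injective M.mulVec ∧ Injective Mᵀ.mulVec := by
  constructor
  · intro h
    constructor
    · intro a b hab
      have key : (Matrix.fromBlocks (0 : Matrix P P F) M (-Mᵀ) (0 : Matrix Q Q F)).mulVec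
          (Sum.elim 0 a) = (Matrix.fromBlocks (0 : Matrix P P F) M (-Mᵀ) (0 : Matrix Q Q F)).mulVec
          (Sum.elim 0 b) := by
        rw [Matrix.fromBlocks_mulVec, Matrix.fromBlocks_mulVec]
        simp only [Sum.elim_comp_inl, Sum.elim_comp_inr]
        simp [hab]
      have := h key
      funext q
      exact congrFun this (Sum.inr q)
    · intro a b hab
      have key : (Matrix.fromBlocks (0 : Matrix P P F) M (-Mᵀ) (0 : Matrix Q Q F)).mulVec
          (Sum.elim a 0) = (Matrix.fromBlocks (0 : Matrix P P F) M (-Mᵀ) (0 : Matrix Q Q F)).mulVec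
          (Sum.elim b 0) := by
        rw [Matrix.fromBlocks_mulVec, Matrix.fromBlocks_mulVec]
        simp only [Sum.elim_comp_inl, Sum.elim_comp_inr]
        simp [Matrix.neg_mulVec, hab]
      have := h key
      funext p
      exact congrFun this (Sum.inl p)
  · rintro ⟨h1, h2⟩ a b hab
    rw [Matrix.fromBlocks_mulVec, Matrix.fromBlocks_mulVec] at hab
    have hQ : M.mulVec (a ∘ Sum.inr) = M.mulVec (b ∘ Sum.inr) := by
      funext p
      have := congrFun hab (Sum.inl p)
      simpa using this
    have hP : Mᵀ.mulVec (a ∘ Sum.inl) = Mᵀ.mulVec (b ∘ Sum.inl) := by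
      funext q
      have := congrFun hab (Sum.inr q)
      simp [Matrix.neg_mulVec] at this
      exact this
    have e1 := h1 hQ
    have e2 := h2 hP
    funext x
    cases x with
    | inl p => exact congrFun e2 p
    | inr q => exact congrFun e1 q

theorem colBlock_injective_iff {F : Type} [Field F] {P Q R : Type}
    [Fintype P] [Fintype Q] [Fintype R] [DecidableEq R]
    (M : Matrix P Q F) (D : Matrix R Q F) :
    Injective (Matrix.fromBlocks (0 : Matrix P R F) M (1 : Matrix R R F) D).mulVec ↔
      Injective M.mulVec := by
  constructor
  · intro h a b hab
    have key : (Matrix.fromBlocks (0 : Matrix P R F) M (1 : Matrix R R F) D).mulVec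
        (Sum.elim (-(D.mulVec a)) a) =
        (Matrix.fromBlocks (0 : Matrix P R F) M (1 : Matrix R R F) D).mulVec
        (Sum.elim (-(D.mulVec b)) b) := by
      rw [Matrix.fromBlocks_mulVec, Matrix.fromBlocks_mulVec]
      simp only [Sum.elim_comp_inl, Sum.elim_comp_inr]
      simp [hab]
    have := h key
    funext q
    exact congrFun this (Sum.inr q)
  · intro h a b hab
    rw [Matrix.fromBlocks_mulVec, Matrix.fromBlocks_mulVec] at hab
    have hQ : M.mulVec (a ∘ Sum.inr) = M.mulVec (b ∘ Sum.inr) := by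
      funext p
      have := congrFun hab (Sum.inl p)
      simpa using this
    have e1 := h hQ
    have e2 : a ∘ Sum.inl = b ∘ Sum.inl := by
      funext r
      have := congrFun hab (Sum.inr r)
      simp [e1] at this
      simpa using this
    funext x
    cases x with
    | inl p => exact congrFun e2 p
    | inr q => exact congrFun e1 q

theorem det_ne_zero_iff_mulVec_injective {F : Type} [Field F] {n : Type} [Fintype n]
    [DecidableEq n] (M : Matrix n n F) :
    M.det ≠ 0 ↔ Function.Injective M.mulVec := by
  rw [Matrix.mulVec_injective_iff_isUnit, Matrix.isUnit_iff_isUnit_det, isUnit_iff_ne_zero]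

theorem mem_colBases_iff_s17 {W F : Type} [Field F] [Fintype W] (B : Matrix W V F)
    (htop : Submodule.span F (Set.range Bᵀ) = ⊤) (Z : Finset V) :
    Z ∈ colBases B ↔ ColIndep B Z ∧ Z.card = Fintype.card W := by
  classical
  have cardle : ∀ W' : Finset V, ColIndep B W' → W'.card ≤ Fintype.card W := by
    intro W' h
    have h2 := h.fintype_card_le_finrank
    rwa [Module.finrank_pi, Fintype.card_coe] at h2
  simp only [colBases, Finset.mem_filter, Finset.mem_univ, true_and]
  constructor
  · rintro ⟨hind, hmax⟩
    refine ⟨hind, le_antisymm (cardle Z hind) ?_⟩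
    by_contra hlt
    push_neg at hlt
    have hKle : Module.finrank F (Submodule.span F (Bᵀ '' ↑Z)) ≤ Z.card := by
      have h1 : ((Z.image fun v => Bᵀ v : Finset (W → F)) : Set (W → F)) = Bᵀ '' ↑Z :=
        Finset.coe_image
      have h2 : Module.finrank F
          (Submodule.span F ((Z.image fun v => Bᵀ v : Finset (W → F)) : Set (W → F))) ≤
          (Z.image fun v => Bᵀ v).card := finrank_span_finset_le_card _
      rw [h1] at h2
      exact le_trans h2 Finset.card_image_le
    have hex : ∃ v : V, Bᵀ v ∉ Submodule.span F (Bᵀ '' ↑Z) := by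
      by_contra hc
      push_neg at hc
      have hle : Submodule.span F (Set.range Bᵀ) ≤ Submodule.span F (Bᵀ '' ↑Z) := by
        rw [Submodule.span_le]
        rintro _ ⟨v, rfl⟩
        exact hc v
      rw [htop] at hle
      rw [top_le_iff.mp hle, finrank_top, Module.finrank_pi] at hKle
      omega
    obtain ⟨v, hv⟩ := hex
    have hvZ : v ∉ Z := fun hmem => hv (Submodule.subset_span (Set.mem_image_of_mem _ hmem))
    have hinjOn : Set.InjOn Bᵀ ↑Z := by
      intro a ha b hb hab
      have h3 : (⟨a, ha⟩ : {x // x ∈ Z}) = ⟨b, hb⟩ := hind.injective hab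
      exact congrArg Subtype.val h3
    have hset := (linearIndepOn_iff_image hinjOn).mp hind
    have hins := hset.id_insert hv
    rw [show insert (Bᵀ v) (Bᵀ '' ↑Z) = Bᵀ '' ↑(insert v Z) by
      rw [Finset.coe_insert]; exact Set.image_insert_eq.symm] at hins
    have hinjOn2 : Set.InjOn Bᵀ ↑(insert v Z) := by
      rw [Finset.coe_insert]
      intro a ha b hb hab
      rcases Set.mem_insert_iff.mp ha with rfl | ha'
      · rcases Set.mem_insert_iff.mp hb with rfl | hb'
        · rfl
        · have hmem : Bᵀ a ∈ Submodule.span F (Bᵀ '' ↑Z) := by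
            rw [hab]
            exact Submodule.subset_span (Set.mem_image_of_mem _ hb')
          exact absurd hmem hv
      · rcases Set.mem_insert_iff.mp hb with rfl | hb'
        · have hmem : Bᵀ b ∈ Submodule.span F (Bᵀ '' ↑Z) := by
            rw [← hab]
            exact Submodule.subset_span (Set.mem_image_of_mem _ ha')
          exact absurd hmem hv
        · exact hinjOn ha' hb' hab
    have hcol : ColIndep B (insert v Z) := (linearIndepOn_iff_image hinjOn2).mpr hins
    have hZeq := hmax (insert v Z) (Finset.subset_insert _ _) hcol
    refine hvZ ?_
    rw [hZeq]
    exact Finset.mem_insert_self v Z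
  · rintro ⟨hind, hcard⟩
    refine ⟨hind, fun W' hsub hind' => Finset.eq_of_subset_of_card_le hsub ?_⟩
    have := cardle W' hind'
    omega

/-- Bouchet: if B = (I | S) is a standard representation of the
matroid M with basis X, and A is the V×V matrix with blocks 0, S, −Sᵀ, 0, then
M_A = M*X: A[Y] is nonsingular iff Y △ X is a basis of M. -/
theorem MA_of_standard_representation {F : Type} [Field F]
    (X : Finset V) (S : Matrix X {a // a ∉ X} F)
    (B : Matrix X V F)
    (hB : ∀ (i : X) (j : V), B i j =
      if hj : j ∈ X then (if (⟨j, hj⟩ : X) = i then 1 else 0) else S i ⟨j, hj⟩)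
    (A : Matrix V V F)
    (hA : ∀ i j : V, A i j =
      if hi : i ∈ X then
        (if hj : j ∈ X then 0 else S ⟨i, hi⟩ ⟨j, hj⟩)
      else
        (if hj : j ∈ X then -(S ⟨j, hj⟩ ⟨i, hi⟩) else 0)) :
    ∀ Y : Finset V, (pSub A Y).det ≠ 0 ↔ Y ∆ X ∈ colBases B := by
  classical
  intro Y
  have hPX : ∀ i : (X ∩ Y : Finset V), i.1 ∈ X := fun i => (Finset.mem_inter.mp i.2).1
  have hPY : ∀ i : (X ∩ Y : Finset V), i.1 ∈ Y := fun i => (Finset.mem_inter.mp i.2).2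
  have hQY : ∀ j : (Y \ X : Finset V), j.1 ∈ Y := fun j => (Finset.mem_sdiff.mp j.2).1
  have hQX : ∀ j : (Y \ X : Finset V), j.1 ∉ X := fun j => (Finset.mem_sdiff.mp j.2).2
  have hRX : ∀ r : (X \ Y : Finset V), r.1 ∈ X := fun r => (Finset.mem_sdiff.mp r.2).1
  have hRY : ∀ r : (X \ Y : Finset V), r.1 ∉ Y := fun r => (Finset.mem_sdiff.mp r.2).2
  have hY : ∀ a, a ∈ Y ↔ a ∈ X ∩ Y ∨ a ∈ Y \ X := by
    intro a; simp only [Finset.mem_inter, Finset.mem_sdiff]; tauto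
  have hdY : ∀ a, a ∈ X ∩ Y → a ∉ Y \ X := by
    intro a; simp only [Finset.mem_inter, Finset.mem_sdiff]; tauto
  have hX : ∀ a, a ∈ X ↔ a ∈ X ∩ Y ∨ a ∈ X \ Y := by
    intro a; simp only [Finset.mem_inter, Finset.mem_sdiff]; tauto
  have hdX : ∀ a, a ∈ X ∩ Y → a ∉ X \ Y := by
    intro a; simp only [Finset.mem_inter, Finset.mem_sdiff]; tauto
  have hZ : ∀ a, a ∈ Y ∆ X ↔ a ∈ X \ Y ∨ a ∈ Y \ X := by
    intro a; simp only [Finset.mem_symmDiff, Finset.mem_sdiff]; tauto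
  have hdZ : ∀ a, a ∈ X \ Y → a ∉ Y \ X := by
    intro a; simp only [Finset.mem_sdiff]; tauto
  have htop : Submodule.span F (Set.range Bᵀ) = ⊤ := by
    rw [Submodule.eq_top_iff']
    intro f
    rw [pi_eq_sum_univ f]
    refine Submodule.sum_mem _ (fun x _ => Submodule.smul_mem _ _ (Submodule.subset_span ?_))
    exact ⟨x.1, by funext w; rw [Matrix.transpose_apply, hB, dif_pos x.2]⟩
  have hsub : (pSub A Y).submatrix (finSumEquiv (X ∩ Y) (Y \ X) Y hY hdY)
      (finSumEquiv (X ∩ Y) (Y \ X) Y hY hdY) =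
      Matrix.fromBlocks 0 (Matrix.of (fun i j => S ⟨i.1, hPX i⟩ ⟨j.1, hQX j⟩))
        (-(Matrix.of (fun i j => S ⟨i.1, hPX i⟩ ⟨j.1, hQX j⟩))ᵀ) 0 := by
    ext i j
    rcases i with i | i <;> rcases j with j | j <;>
      simp only [Matrix.submatrix_apply, finSumEquiv, Equiv.coe_fn_mk, Sum.elim_inl,
        Sum.elim_inr, Matrix.fromBlocks_apply₁₁, Matrix.fromBlocks_apply₁₂,
        Matrix.fromBlocks_apply₂₁, Matrix.fromBlocks_apply₂₂, pSub, Matrix.of_apply,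
        Matrix.zero_apply, Matrix.neg_apply, Matrix.transpose_apply]
    · rw [hA, dif_pos (hPX i), dif_pos (hPX j)]
    · rw [hA, dif_pos (hPX i), dif_neg (hQX j)]
    · rw [hA, dif_neg (hQX i), dif_pos (hPX j)]
    · rw [hA, dif_neg (hQX i), dif_neg (hQX j)]
  have step1 : (pSub A Y).det ≠ 0 ↔
      (Function.Injective (Matrix.of (fun i j => S ⟨i.1, hPX i⟩ ⟨j.1, hQX j⟩)).mulVec ∧
       Function.Injective (Matrix.of (fun i j => S ⟨i.1, hPX i⟩ ⟨j.1, hQX j⟩))ᵀ.mulVec) := by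
    rw [← Matrix.det_submatrix_equiv_self (finSumEquiv (X ∩ Y) (Y \ X) Y hY hdY) (pSub A Y),
      hsub, det_ne_zero_iff_mulVec_injective, skewBlock_injective_iff]
  have hNsub : (Matrix.of (fun (i : X) (z : (Y ∆ X : Finset V)) => B i z.1)).submatrix
      (finSumEquiv (X ∩ Y) (X \ Y) X hX hdX) (finSumEquiv (X \ Y) (Y \ X) (Y ∆ X) hZ hdZ) =
      Matrix.fromBlocks 0 (Matrix.of (fun i j => S ⟨i.1, hPX i⟩ ⟨j.1, hQX j⟩)) 1
        (Matrix.of (fun i j => S ⟨i.1, hRX i⟩ ⟨j.1, hQX j⟩)) := by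
    ext i j
    rcases i with i | i <;> rcases j with j | j <;>
      simp only [Matrix.submatrix_apply, finSumEquiv, Equiv.coe_fn_mk, Sum.elim_inl,
        Sum.elim_inr, Matrix.fromBlocks_apply₁₁, Matrix.fromBlocks_apply₁₂,
        Matrix.fromBlocks_apply₂₁, Matrix.fromBlocks_apply₂₂, Matrix.of_apply,
        Matrix.zero_apply]
    · rw [hB, dif_pos (hRX j), if_neg]
      intro hcon
      have hval : j.1 = i.1 := congrArg Subtype.val hcon
      exact hRY j (by rw [hval]; exact hPY i)
    · rw [hB, dif_neg (hQX j)]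
    · rw [hB, dif_pos (hRX j), Matrix.one_apply]
      by_cases h : i = j
      · subst h
        rw [if_pos rfl, if_pos rfl]
      · have hv : (↑j : V) ≠ ↑i := fun he => h (Subtype.ext he.symm)
        simp only [Subtype.mk.injEq]
        rw [if_neg hv, if_neg h]
    · rw [hB, dif_neg (hQX j)]
  have step2 : ColIndep B (Y ∆ X) ↔
      Function.Injective (Matrix.of (fun i j => S ⟨i.1, hPX i⟩ ⟨j.1, hQX j⟩)).mulVec := by
    have h0 : ColIndep B (Y ∆ X) ↔ Function.Injective
        (Matrix.of (fun (i : X) (z : (Y ∆ X : Finset V)) => B i z.1)).mulVec :=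
      Iff.symm Matrix.mulVec_injective_iff
    rw [h0, ← mulVec_injective_submatrix _ (finSumEquiv (X ∩ Y) (X \ Y) X hX hdX)
      (finSumEquiv (X \ Y) (Y \ X) (Y ∆ X) hZ hdZ), hNsub, colBlock_injective_iff]
  have hc1 : (Y ∆ X).card = (Y \ X).card + (X \ Y).card := by
    rw [symmDiff_def, Finset.sup_eq_union, Finset.card_union_of_disjoint disjoint_sdiff_sdiff]
  have hc2 : (X ∩ Y).card + (X \ Y).card = X.card := Finset.card_inter_add_card_sdiff X Y
  have hc3 : (X ∩ Y).card = (Y ∩ X).card := by rw [Finset.inter_comm]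
  rw [step1, mem_colBases_iff_s17 B htop]
  constructor
  · rintro ⟨hc, hct⟩
    refine ⟨step2.mpr hc, ?_⟩
    have b1 := card_le_of_mulVec_injective _ hc
    have b2 := card_le_of_mulVec_injective _ hct
    simp only [Fintype.card_coe] at b1 b2 ⊢
    omega
  · rintro ⟨hi, hcard⟩
    have hCinj := step2.mp hi
    refine ⟨hCinj, transpose_injective_of_card_eq _ hCinj ?_⟩
    simp only [Fintype.card_coe] at hcard ⊢
    omega
end
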